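/- arXiv:math/0404324 — 6 statements merged into one kernel-verified Lean document; each statement's English description precedes it below -/
import Mathlib

section
/- For every b = (x_1,…,x_n | x̄_n,…,x̄_1) in B^(l), one has ε_0(b) + ε_1(b) + 2·Σ_{i=2}^{n−2} ε_i(b) + ε_{n−1}(b) + ε_n(b) = l + Σ_{i=2}^{n−1} |x_i − x̄_i|; in particular this sum is ≥ l (the perfectness level inequality), with equality if and only if x_i = x̄_i for all i with 2 ≤ i ≤ n−1. -/
/-- An element candidate of the level-`l` perfect crystal of type `D_n^(1)`:
a pair of integer sequences `(x, x̄)`, whose relevant entries are indexed by `1, …, n`. -/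
abbrev DElt : Type := (ℕ → ℤ) × (ℕ → ℤ)

/-- All entries (indices `1, …, n`) are nonnegative; for the result of a Kashiwara
operator this expresses that the result "is not `0`". -/
def dvalid (n : ℕ) (p : DElt) : Prop :=
  ∀ i, 1 ≤ i → i ≤ n → 0 ≤ p.1 i ∧ 0 ≤ p.2 i

/-- Membership in the level-`l` perfect crystal `B^(l)` of type `D_n^(1)`:
all entries are nonnegative integers (we normalize the irrelevant indices to `0`),
`x_n = 0` or `x̄_n = 0`, and `Σ_{i=1}^n (x_i + x̄_i) = l`. -/
def dmem (n l : ℕ) (p : DElt) : Prop :=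
  dvalid n p ∧
  (∀ i, i = 0 ∨ n < i → p.1 i = 0 ∧ p.2 i = 0) ∧
  (p.1 n = 0 ∨ p.2 n = 0) ∧
  (∑ i ∈ Finset.Icc 1 n, (p.1 i + p.2 i)) = (l : ℤ)

/-- `(x)_+ = max(0, x)`. -/
def pPart (x : ℤ) : ℤ := max 0 x

/-- `φ_i(b)` for `b = (x | x̄)`:  `φ_0 = x̄_1 + (x̄_2 - x_2)_+`;
`φ_i = x_i + (x̄_{i+1} - x_{i+1})_+` for `1 ≤ i ≤ n-2`;
`φ_{n-1} = x_{n-1} + x̄_n`;  `φ_n = x_{n-1} + x_n`. -/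
def dphi (n i : ℕ) (p : DElt) : ℤ :=
  if i = 0 then p.2 1 + pPart (p.2 2 - p.1 2)
  else if i ≤ n - 2 then p.1 i + pPart (p.2 (i+1) - p.1 (i+1))
  else if i = n - 1 then p.1 (n-1) + p.2 n
  else p.1 (n-1) + p.1 n

/-- `ε_i(b)` for `b = (x | x̄)`:  `ε_0 = x_1 + (x_2 - x̄_2)_+`;
`ε_i = x̄_i + (x_{i+1} - x̄_{i+1})_+` for `1 ≤ i ≤ n-2`;
`ε_{n-1} = x̄_{n-1} + x_n`;  `ε_n = x̄_{n-1} + x̄_n`. -/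
def deps (n i : ℕ) (p : DElt) : ℤ :=
  if i = 0 then p.1 1 + pPart (p.1 2 - p.2 2)
  else if i ≤ n - 2 then p.2 i + pPart (p.1 (i+1) - p.2 (i+1))
  else if i = n - 1 then p.2 (n-1) + p.1 n
  else p.2 (n-1) + p.2 n

/-- The Kashiwara operator `f̃_i` of Theorem 2.2, as a total map on pairs of sequences;
"being `0`" is recorded by failure of `dvalid` for the result. -/
def ftilde (n i : ℕ) (p : DElt) : DElt :=
  if i = 0 then
    -- case `x_2 ≥ x̄_2` / case `x_2 < x̄_2`
    if p.2 2 ≤ p.1 2 then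
      (Function.update p.1 2 (p.1 2 + 1), Function.update p.2 1 (p.2 1 - 1))
    else
      (Function.update p.1 1 (p.1 1 + 1), Function.update p.2 2 (p.2 2 - 1))
  else if i ≤ n - 2 then
    -- case `x_{i+1} ≥ x̄_{i+1}` / case `x_{i+1} < x̄_{i+1}`
    if p.2 (i+1) ≤ p.1 (i+1) then
      (Function.update (Function.update p.1 i (p.1 i - 1)) (i+1) (p.1 (i+1) + 1), p.2)
    else
      (p.1, Function.update (Function.update p.2 (i+1) (p.2 (i+1) - 1)) i (p.2 i + 1))
  else if i = n - 1 then
    -- case `x̄_n = 0` / case `x_n = 0, x̄_n ≥ 1`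
    if p.2 n = 0 then
      (Function.update (Function.update p.1 (n-1) (p.1 (n-1) - 1)) n (p.1 n + 1), p.2)
    else
      (p.1, Function.update (Function.update p.2 n (p.2 n - 1)) (n-1) (p.2 (n-1) + 1))
  else
    -- `i = n`: case `x_n ≥ 1, x̄_n = 0` / case `x_n = 0`
    if 1 ≤ p.1 n ∧ p.2 n = 0 then
      (Function.update p.1 n (p.1 n - 1), Function.update p.2 (n-1) (p.2 (n-1) + 1))
    else
      (Function.update p.1 (n-1) (p.1 (n-1) - 1), Function.update p.2 n (p.2 n + 1))

/-- The Kashiwara operator `ẽ_i` of Theorem 2.2, as a total map on pairs of sequences;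
"being `0`" is recorded by failure of `dvalid` for the result. -/
def etilde (n i : ℕ) (p : DElt) : DElt :=
  if i = 0 then
    -- case `x_2 > x̄_2` / case `x_2 ≤ x̄_2`
    if p.2 2 < p.1 2 then
      (Function.update p.1 2 (p.1 2 - 1), Function.update p.2 1 (p.2 1 + 1))
    else
      (Function.update p.1 1 (p.1 1 - 1), Function.update p.2 2 (p.2 2 + 1))
  else if i ≤ n - 2 then
    -- case `x_{i+1} > x̄_{i+1}` / case `x_{i+1} ≤ x̄_{i+1}`
    if p.2 (i+1) < p.1 (i+1) then
      (Function.update (Function.update p.1 i (p.1 i + 1)) (i+1) (p.1 (i+1) - 1), p.2)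
    else
      (p.1, Function.update (Function.update p.2 (i+1) (p.2 (i+1) + 1)) i (p.2 i - 1))
  else if i = n - 1 then
    -- case `x_n ≥ 1, x̄_n = 0` / case `x_n = 0`
    if 1 ≤ p.1 n ∧ p.2 n = 0 then
      (Function.update (Function.update p.1 (n-1) (p.1 (n-1) + 1)) n (p.1 n - 1), p.2)
    else
      (p.1, Function.update (Function.update p.2 n (p.2 n + 1)) (n-1) (p.2 (n-1) - 1))
  else
    -- `i = n`: case `x̄_n = 0` / case `x_n = 0, x̄_n ≥ 1`
    if p.2 n = 0 then
      (Function.update p.1 n (p.1 n + 1), Function.update p.2 (n-1) (p.2 (n-1) - 1))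
    else
      (Function.update p.1 (n-1) (p.1 (n-1) + 1), Function.update p.2 n (p.2 n - 1))

lemma two_pPart (a : ℤ) : 2 * pPart a = |a| + a := by
  rcases abs_cases a with ⟨h1, h2⟩ | ⟨h1, h2⟩
  · rw [h1, pPart, max_eq_right h2]; ring
  · rw [h1, pPart, max_eq_left (by linarith)]; ring

/-- for `b = (x | x̄) ∈ B^(l)`,
`ε_0 + ε_1 + 2 Σ_{i=2}^{n-2} ε_i + ε_{n-1} + ε_n = l + Σ_{i=2}^{n-1} |x_i - x̄_i|`;
in particular this sum is `≥ l`, with equality iff `x_i = x̄_i` for all `2 ≤ i ≤ n-1`. -/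
theorem stmt13 (n l : ℕ) (hn : 4 ≤ n) (hl : 1 ≤ l) (p : DElt) (hp : dmem n l p) :
    (deps n 0 p + deps n 1 p + 2 * (∑ i ∈ Finset.Icc 2 (n-2), deps n i p)
        + deps n (n-1) p + deps n n p
      = (l : ℤ) + ∑ i ∈ Finset.Icc 2 (n-1), |p.1 i - p.2 i|) ∧
    ((l : ℤ) ≤ deps n 0 p + deps n 1 p + 2 * (∑ i ∈ Finset.Icc 2 (n-2), deps n i p)
        + deps n (n-1) p + deps n n p) ∧
    (deps n 0 p + deps n 1 p + 2 * (∑ i ∈ Finset.Icc 2 (n-2), deps n i p)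
        + deps n (n-1) p + deps n n p = (l : ℤ) ↔
      ∀ i, 2 ≤ i → i ≤ n - 1 → p.1 i = p.2 i) := by
  obtain ⟨hv, hz, hor, hsum⟩ := hp
  set x := p.1 with hx
  set y := p.2 with hy
  have h0 : deps n 0 p = x 1 + pPart (x 2 - y 2) := by simp [deps, hx, hy]
  have h1 : deps n 1 p = y 1 + pPart (x 2 - y 2) := by
    have e : 1 ≤ n - 2 := by omega
    simp [deps, e, hx, hy]
  have hn1 : deps n (n-1) p = y (n-1) + x n := by
    have e1 : (n-1 : ℕ) ≠ 0 := by omega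
    have e2 : ¬ (n-1 ≤ n-2) := by omega
    simp [deps, e1, e2, hx, hy]
  have hnn : deps n n p = y (n-1) + y n := by
    have e1 : (n:ℕ) ≠ 0 := by omega
    have e2 : ¬ (n ≤ n-2) := by omega
    have e3 : n ≠ n - 1 := by omega
    simp [deps, e1, e2, e3, hx, hy]
  have hmid : ∑ i ∈ Finset.Icc 2 (n-2), deps n i p
      = ∑ i ∈ Finset.Icc 2 (n-2), (y i + pPart (x (i+1) - y (i+1))) := by
    apply Finset.sum_congr rfl
    intro i hi
    simp only [Finset.mem_Icc] at hi
    have e1 : i ≠ 0 := by omega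
    simp [deps, e1, hi.2, hx, hy]
  -- index shift
  have hshift : ∑ j ∈ Finset.Icc 3 (n-1), (|x j - y j| + (x j - y j))
      = ∑ i ∈ Finset.Icc 2 (n-2), (|x (i+1) - y (i+1)| + (x (i+1) - y (i+1))) := by
    have h := Finset.map_add_right_Icc 2 (n-2) 1
    rw [show n-1 = n-2+1 by omega, show (3:ℕ) = 2+1 from rfl, ← h, Finset.sum_map]
    simp [addRightEmbedding_apply]
  -- decompositions
  have d1 : Finset.Icc 2 (n-1) = insert 2 (Finset.Icc 3 (n-1)) := by
    ext j; simp only [Finset.mem_Icc, Finset.mem_insert]; omega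
  have d1' : (2:ℕ) ∉ Finset.Icc 3 (n-1) := by simp
  have d2 : Finset.Icc 2 (n-1) = insert (n-1) (Finset.Icc 2 (n-2)) := by
    ext j; simp only [Finset.mem_Icc, Finset.mem_insert]; omega
  have d2' : (n-1:ℕ) ∉ Finset.Icc 2 (n-2) := by simp only [Finset.mem_Icc]; omega
  have d3 : Finset.Icc 1 n = insert 1 (insert n (Finset.Icc 2 (n-1))) := by
    ext j; simp only [Finset.mem_Icc, Finset.mem_insert]; omega
  have d3' : (1:ℕ) ∉ insert n (Finset.Icc 2 (n-1)) := by
    simp only [Finset.mem_insert, Finset.mem_Icc]; omega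
  have d3'' : (n:ℕ) ∉ Finset.Icc 2 (n-1) := by simp only [Finset.mem_Icc]; omega
  have hsum' : x 1 + y 1 + (x n + y n + ∑ i ∈ Finset.Icc 2 (n-1), (x i + y i)) = (l:ℤ) := by
    rw [← hsum, d3, Finset.sum_insert d3', Finset.sum_insert d3'']
  have hmul : 2 * (∑ i ∈ Finset.Icc 2 (n-2), (y i + pPart (x (i+1) - y (i+1))))
      = (∑ i ∈ Finset.Icc 2 (n-2), 2 * y i)
        + ∑ i ∈ Finset.Icc 2 (n-2), (|x (i+1) - y (i+1)| + (x (i+1) - y (i+1))) := by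
    rw [Finset.mul_sum, ← Finset.sum_add_distrib]
    apply Finset.sum_congr rfl
    intro i _
    rw [mul_add, two_pPart]
  have habs : ∑ i ∈ Finset.Icc 2 (n-1), (|x i - y i| + (x i - y i))
      = |x 2 - y 2| + (x 2 - y 2) + ∑ j ∈ Finset.Icc 3 (n-1), (|x j - y j| + (x j - y j)) := by
    rw [d1, Finset.sum_insert d1']
  have hysum : ∑ i ∈ Finset.Icc 2 (n-1), 2 * y i
      = 2 * y (n-1) + ∑ i ∈ Finset.Icc 2 (n-2), 2 * y i := by
    rw [d2, Finset.sum_insert d2']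
  have hcomb : ∑ i ∈ Finset.Icc 2 (n-1), (|x i - y i| + (x i - y i))
        + ∑ i ∈ Finset.Icc 2 (n-1), 2 * y i
      = (∑ i ∈ Finset.Icc 2 (n-1), |x i - y i|) + ∑ i ∈ Finset.Icc 2 (n-1), (x i + y i) := by
    rw [← Finset.sum_add_distrib, ← Finset.sum_add_distrib]
    apply Finset.sum_congr rfl
    intro i _; ring
  have main : deps n 0 p + deps n 1 p + 2 * (∑ i ∈ Finset.Icc 2 (n-2), deps n i p)
      + deps n (n-1) p + deps n n p
      = (l : ℤ) + ∑ i ∈ Finset.Icc 2 (n-1), |x i - y i| := by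
    rw [h0, h1, hn1, hnn, hmid, hmul]
    have h2p : 2 * pPart (x 2 - y 2) = |x 2 - y 2| + (x 2 - y 2) := two_pPart _
    rw [← hshift] at *
    linarith [hcomb, habs, hysum, hsum', h2p]
  refine ⟨main, ?_, ?_⟩
  · rw [main]
    have : (0:ℤ) ≤ ∑ i ∈ Finset.Icc 2 (n-1), |x i - y i| :=
      Finset.sum_nonneg fun i _ => abs_nonneg _
    linarith
  · rw [main]
    constructor
    · intro h i hi2 hin
      have hA : ∑ i ∈ Finset.Icc 2 (n-1), |x i - y i| = 0 := by linarith
      have hi : i ∈ Finset.Icc 2 (n-1) := by simp only [Finset.mem_Icc]; omega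
      have := (Finset.sum_eq_zero_iff_of_nonneg (fun i _ => abs_nonneg _)).1 hA i hi
      have := abs_eq_zero.1 this
      linarith
    · intro h
      have hA : ∑ i ∈ Finset.Icc 2 (n-1), |x i - y i| = 0 := by
        apply Finset.sum_eq_zero
        intro i hi
        simp only [Finset.mem_Icc] at hi
        rw [h i hi.1 hi.2]; simp
      rw [hA]; ring
end

section
/- The map b ↦ (ε_0(b), ε_1(b), …, ε_n(b)) restricts to a bijection from the set of minimal elements {b ∈ B^(l) : x_i = x̄_i for all 2 ≤ i ≤ n−1} onto the set {(a_0,…,a_n) ∈ ℕ^{n+1} : a_0 + a_1 + 2(a_2 + ⋯ + a_{n−2}) + a_{n−1} + a_n = l} of level-l dominant classical weights of D_n^(1). -/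
-- auxiliary lemmas to insert
lemma sum_split (n : ℕ) (hn : 4 ≤ n) (f : ℕ → ℤ) :
    ∑ i ∈ Finset.Icc 1 n, f i
      = f 1 + (∑ i ∈ Finset.Icc 2 (n-2), f i) + f (n-1) + f n := by
  have h : Finset.Icc 1 n = insert 1 (insert (n-1) (insert n (Finset.Icc 2 (n-2)))) := by
    ext x
    simp only [Finset.mem_Icc, Finset.mem_insert]
    omega
  rw [h, Finset.sum_insert (by simp only [Finset.mem_insert, Finset.mem_Icc]; omega),
      Finset.sum_insert (by simp only [Finset.mem_insert, Finset.mem_Icc]; omega),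
      Finset.sum_insert (by simp only [Finset.mem_Icc]; omega)]
  ring

lemma deps_zero (n : ℕ) (p : DElt) (h2 : p.1 2 = p.2 2) :
    deps n 0 p = p.1 1 := by
  unfold deps
  rw [if_pos rfl, h2]
  simp [pPart]

lemma deps_mid (n i : ℕ) (h1 : 1 ≤ i) (h2 : i ≤ n - 2) (p : DElt)
    (h : p.1 (i+1) = p.2 (i+1)) : deps n i p = p.2 i := by
  unfold deps
  rw [if_neg (by omega), if_pos h2, h]
  simp [pPart]

lemma deps_top1 (n : ℕ) (hn : 4 ≤ n) (p : DElt) :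
    deps n (n-1) p = p.2 (n-1) + p.1 n := by
  unfold deps
  rw [if_neg (by omega), if_neg (by omega), if_pos rfl]

lemma deps_top (n : ℕ) (hn : 4 ≤ n) (p : DElt) :
    deps n n p = p.2 (n-1) + p.2 n := by
  unfold deps
  rw [if_neg (by omega), if_neg (by omega), if_neg (by omega)]

/-- `b ↦ (ε_0(b), …, ε_n(b))` is a bijection from the set of minimal
elements `{b ∈ B^(l) : x_i = x̄_i for 2 ≤ i ≤ n-1}` onto the set of level-`l` dominant
classical weights `{(a_0,…,a_n) ∈ ℕ^{n+1} : a_0 + a_1 + 2(a_2 + ⋯ + a_{n-2}) + a_{n-1} + a_n = l}`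
(tuples are encoded as integer sequences vanishing beyond index `n`). -/
theorem stmt14 (n l : ℕ) (hn : 4 ≤ n) (hl : 1 ≤ l) :
    Set.BijOn (fun p : DElt => fun i : ℕ => if i ≤ n then deps n i p else 0)
      {p : DElt | dmem n l p ∧ ∀ i, 2 ≤ i → i ≤ n - 1 → p.1 i = p.2 i}
      {a : ℕ → ℤ | (∀ i, i ≤ n → 0 ≤ a i) ∧ (∀ i, n < i → a i = 0) ∧
        a 0 + a 1 + 2 * (∑ i ∈ Finset.Icc 2 (n-2), a i) + a (n-1) + a n = (l : ℤ)} := by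
  refine ⟨?_, ?_, ?_⟩
  · -- MapsTo
    rintro p ⟨⟨hval, hbd, hor, hsum⟩, hmin⟩
    have h12 : p.1 2 = p.2 2 := hmin 2 le_rfl (by omega)
    refine ⟨?_, ?_, ?_⟩
    · intro i hi
      simp only
      rw [if_pos hi]
      by_cases h0 : i = 0
      · subst h0
        rw [deps_zero n p h12]
        exact (hval 1 le_rfl (by omega)).1
      by_cases hm : i ≤ n - 2
      · rw [deps_mid n i (by omega) hm p (hmin (i+1) (by omega) (by omega))]
        exact (hval i (by omega) (by omega)).2
      by_cases h1 : i = n - 1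
      · subst h1
        rw [deps_top1 n hn p]
        have h := (hval (n-1) (by omega) (by omega)).2
        have h' := (hval n (by omega) le_rfl).1
        omega
      · have hin : n = i := by omega
        subst hin
        rw [deps_top n hn p]
        have h := (hval (n-1) (by omega) (by omega)).2
        have h' := (hval n (by omega) le_rfl).2
        omega
    · intro i hi
      simp only
      rw [if_neg (by omega)]
    · -- sum condition
      rw [sum_split n hn (fun i => p.1 i + p.2 i)] at hsum
      have hmid : ∑ i ∈ Finset.Icc 2 (n-2), (p.1 i + p.2 i)
          = 2 * ∑ i ∈ Finset.Icc 2 (n-2), p.2 i := by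
        rw [Finset.mul_sum]
        refine Finset.sum_congr rfl ?_
        intro i hi
        rw [Finset.mem_Icc] at hi
        rw [hmin i hi.1 (by omega)]
        ring
      rw [hmid] at hsum
      simp only
      rw [if_pos (by omega : (0:ℕ) ≤ n), if_pos (by omega : 1 ≤ n),
          if_pos (by omega : n - 1 ≤ n), if_pos (le_refl n),
          deps_zero n p h12,
          deps_mid n 1 le_rfl (by omega) p (hmin 2 (by omega) (by omega)),
          deps_top1 n hn p, deps_top n hn p]
      have hmid2 : ∑ i ∈ Finset.Icc 2 (n-2), (if i ≤ n then deps n i p else 0)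
          = ∑ i ∈ Finset.Icc 2 (n-2), p.2 i := by
        refine Finset.sum_congr rfl ?_
        intro i hi
        rw [Finset.mem_Icc] at hi
        rw [if_pos (by omega),
            deps_mid n i (by omega) hi.2 p (hmin (i+1) (by omega) (by omega))]
      rw [hmid2]
      have hn1 : p.1 (n-1) = p.2 (n-1) := hmin (n-1) (by omega) le_rfl
      linarith [hsum]
  · -- InjOn
    rintro p ⟨⟨hpval, hpbd, hpor, hpsum⟩, hpmin⟩ q ⟨⟨hqval, hqbd, hqor, hqsum⟩, hqmin⟩ hEq
    have E : ∀ j, j ≤ n → deps n j p = deps n j q := by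
      intro j hj
      have h := congrFun hEq j
      simp only [if_pos hj] at h
      exact h
    have E0 := E 0 (by omega)
    rw [deps_zero n p (hpmin 2 le_rfl (by omega)),
        deps_zero n q (hqmin 2 le_rfl (by omega))] at E0
    have Emid : ∀ i, 1 ≤ i → i ≤ n-2 → p.2 i = q.2 i := by
      intro i h1 h2
      have h := E i (by omega)
      rwa [deps_mid n i h1 h2 p (hpmin (i+1) (by omega) (by omega)),
           deps_mid n i h1 h2 q (hqmin (i+1) (by omega) (by omega))] at h
    have A := E (n-1) (by omega)
    rw [deps_top1 n hn p, deps_top1 n hn q] at A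
    have B := E n le_rfl
    rw [deps_top n hn p, deps_top n hn q] at B
    have hpn := hpval n (by omega) le_rfl
    have hqn := hqval n (by omega) le_rfl
    have hkey : p.2 (n-1) = q.2 (n-1) := by
      rcases hpor with h|h <;> rcases hqor with h'|h' <;> omega
    have h1n : p.1 n = q.1 n := by omega
    have h2n : p.2 n = q.2 n := by omega
    have hfst : p.1 = q.1 := by
      funext i
      by_cases h0 : i = 0 ∨ n < i
      · rw [(hpbd i h0).1, (hqbd i h0).1]
      push_neg at h0
      by_cases hi1 : i = 1
      · subst hi1; exact E0
      by_cases him : i ≤ n - 2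
      · rw [hpmin i (by omega) (by omega), hqmin i (by omega) (by omega)]
        exact Emid i (by omega) him
      by_cases hin1 : i = n - 1
      · subst hin1
        rw [hpmin (n-1) (by omega) le_rfl, hqmin (n-1) (by omega) le_rfl]
        exact hkey
      · have hin : i = n := by omega
        subst hin; exact h1n
    have hsnd : p.2 = q.2 := by
      funext i
      by_cases h0 : i = 0 ∨ n < i
      · rw [(hpbd i h0).2, (hqbd i h0).2]
      push_neg at h0
      by_cases him : i ≤ n - 2
      · exact Emid i (by omega) him
      by_cases hin1 : i = n - 1
      · subst hin1; exact hkey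
      · have hin : i = n := by omega
        subst hin; exact h2n
    exact Prod.ext hfst hsnd
  · -- SurjOn
    rintro a ⟨ha0, haz, hsum⟩
    obtain ⟨s, hs0, hs1, hs2, hsor⟩ :
        ∃ s : ℤ, 0 ≤ s ∧ s ≤ a (n-1) ∧ s ≤ a n ∧ (s = a (n-1) ∨ s = a n) := by
      rcases le_total (a (n-1)) (a n) with h|h
      · exact ⟨a (n-1), ha0 (n-1) (by omega), le_rfl, h, Or.inl rfl⟩
      · exact ⟨a n, ha0 n le_rfl, h, le_rfl, Or.inr rfl⟩
    obtain ⟨X, hX⟩ : ∃ X : ℕ → ℤ, X = fun i =>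
        if i = 1 then a 0 else if 2 ≤ i ∧ i ≤ n-2 then a i
        else if i = n-1 then s else if i = n then a (n-1) - s else 0 := ⟨_, rfl⟩
    obtain ⟨Y, hY⟩ : ∃ Y : ℕ → ℤ, Y = fun i =>
        if i = 1 then a 1 else if 2 ≤ i ∧ i ≤ n-2 then a i
        else if i = n-1 then s else if i = n then a n - s else 0 := ⟨_, rfl⟩
    have hX1 : X 1 = a 0 := by simp only [hX]; split_ifs <;> omega
    have hY1 : Y 1 = a 1 := by simp only [hY]; split_ifs <;> omega
    have hXm : ∀ i, 2 ≤ i → i ≤ n-2 → X i = a i := by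
      intro i h1 h2
      simp only [hX]; split_ifs <;> omega
    have hYm : ∀ i, 2 ≤ i → i ≤ n-2 → Y i = a i := by
      intro i h1 h2
      simp only [hY]; split_ifs <;> omega
    have hXn1 : X (n-1) = s := by
      simp only [hX]; split_ifs <;> omega
    have hYn1 : Y (n-1) = s := by
      simp only [hY]; split_ifs <;> omega
    have hXn : X n = a (n-1) - s := by
      simp only [hX]; split_ifs <;> omega
    have hYn : Y n = a n - s := by
      simp only [hY]; split_ifs <;> omega
    have hX0 : ∀ i, i = 0 ∨ n < i → X i = 0 := by
      intro i hi
      simp only [hX]; split_ifs <;> omega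
    have hY0 : ∀ i, i = 0 ∨ n < i → Y i = 0 := by
      intro i hi
      simp only [hY]; split_ifs <;> omega
    have hminp : ∀ i, 2 ≤ i → i ≤ n - 1 → X i = Y i := by
      intro i h1 h2
      by_cases hm : i ≤ n - 2
      · rw [hXm i h1 hm, hYm i h1 hm]
      · have hi : i = n - 1 := by omega
        subst hi; rw [hXn1, hYn1]
    have hval : dvalid n (X, Y) := by
      intro i h1 h2
      dsimp only
      by_cases hA : i = 1
      · subst hA; rw [hX1, hY1]
        exact ⟨ha0 0 (by omega), ha0 1 (by omega)⟩
      by_cases hB : i ≤ n - 2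
      · rw [hXm i (by omega) hB, hYm i (by omega) hB]
        exact ⟨ha0 i (by omega), ha0 i (by omega)⟩
      by_cases hC : i = n - 1
      · subst hC; rw [hXn1, hYn1]; exact ⟨hs0, hs0⟩
      · have hi : i = n := by omega
        subst hi; rw [hXn, hYn]
        constructor <;> omega
    have hsum' : (∑ i ∈ Finset.Icc 1 n, ((X, Y).1 i + (X, Y).2 i)) = (l : ℤ) := by
      rw [sum_split n hn]
      dsimp only
      rw [hX1, hY1, hXn1, hYn1, hXn, hYn]
      have hms : ∑ i ∈ Finset.Icc 2 (n-2), (X i + Y i)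
          = 2 * ∑ i ∈ Finset.Icc 2 (n-2), a i := by
        rw [Finset.mul_sum]
        refine Finset.sum_congr rfl ?_
        intro i hi
        rw [Finset.mem_Icc] at hi
        rw [hXm i hi.1 hi.2, hYm i hi.1 hi.2]
        ring
      rw [hms]
      linarith [hsum]
    refine ⟨(X, Y), ⟨⟨hval, ?_, ?_, hsum'⟩, hminp⟩, ?_⟩
    · intro i hi
      exact ⟨hX0 i hi, hY0 i hi⟩
    · dsimp only
      rw [hXn, hYn]
      rcases hsor with h|h
      · left; omega
      · right; omega
    · -- the image equals a
      funext i
      simp only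
      by_cases hi : i ≤ n
      · rw [if_pos hi]
        by_cases h0 : i = 0
        · subst h0
          rw [deps_zero n (X, Y) (hminp 2 le_rfl (by omega))]
          exact hX1
        by_cases hm : i ≤ n - 2
        · rw [deps_mid n i (by omega) hm (X, Y) (hminp (i+1) (by omega) (by omega))]
          dsimp only
          by_cases hi1 : i = 1
          · subst hi1; exact hY1
          · exact hYm i (by omega) hm
        by_cases h1 : i = n - 1
        · subst h1
          rw [deps_top1 n hn (X, Y)]
          dsimp only
          rw [hYn1, hXn]
          ring
        · have hin : n = i := by omega
          subst hin
          rw [deps_top n hn (X, Y)]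
          dsimp only
          rw [hYn1, hYn]
          ring
      · rw [if_neg hi]
        exact (haz i (by omega)).symm
end

section
/- (Combinatorial core of the slice realization, Theorem 3.7.) Let Y^(l) be the set of tuples of nonnegative integers (y_1,…,y_n, ȳ_1,…,ȳ_n, y*_{01}, y*_2,…,y*_{n−2}, y*_{n−1,n}) such that y_i·ȳ_i = 0 for all 1 ≤ i ≤ n and 2(y*_{01} + Σ_{i=2}^{n−2} y*_i + y*_{n−1,n}) + Σ_{i=1}^n (y_i + ȳ_i) = l. Define Φ : Y^(l) → B^(l) by x_1 = y_1 + y*_{01}; x_i = y_i + y*_i for 2 ≤ i ≤ n−2; x_{n−1} = y_{n−1} + y*_{n−1,n}; x_n = y_n; x̄_n = ȳ_n; x̄_{n−1} = ȳ_{n−1} + y*_{n−1,n}; x̄_i = ȳ_i + y*_i for 2 ≤ i ≤ n−2; x̄_1 = ȳ_1 + y*_{01}. Define Ψ : B^(l) → Y^(l) by y_i = (x_i − x̄_i)_+ and ȳ_i = (x̄_i − x_i)_+ for 1 ≤ i ≤ n−1; y_n = x_n; ȳ_n = x̄_n; y*_{01} = min(x_1, x̄_1); y*_i = min(x_i, x̄_i)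 for 2 ≤ i ≤ n−2; y*_{n−1,n} = min(x_{n−1}, x̄_{n−1}). Then Φ and Ψ are well-defined and are mutually inverse bijections between Y^(l) and B^(l). -/
/-- Data for `Y^(l)`: a triple `(y, ȳ, y*)` of integer sequences; `y, ȳ` are indexed by
`1, …, n` and `y*` by `1, …, n-1` (index `1` encodes `y*_{01}`, index `i` with
`2 ≤ i ≤ n-2` encodes `y*_i`, and index `n-1` encodes `y*_{n-1,n}`). -/
abbrev YElt : Type := (ℕ → ℤ) × (ℕ → ℤ) × (ℕ → ℤ)

/-- Membership in `Y^(l)`: all entries nonnegative (irrelevant indices normalized to `0`),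
`y_i ⋅ ȳ_i = 0` for `1 ≤ i ≤ n`, and
`2(y*_{01} + Σ_{i=2}^{n-2} y*_i + y*_{n-1,n}) + Σ_{i=1}^n (y_i + ȳ_i) = l`. -/
def ymem (n l : ℕ) (q : YElt) : Prop :=
  (∀ i, 1 ≤ i → i ≤ n → 0 ≤ q.1 i ∧ 0 ≤ q.2.1 i) ∧
  (∀ i, 1 ≤ i → i ≤ n - 1 → 0 ≤ q.2.2 i) ∧
  (∀ i, i = 0 ∨ n < i → q.1 i = 0 ∧ q.2.1 i = 0) ∧
  (∀ i, i = 0 ∨ n - 1 < i → q.2.2 i = 0) ∧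
  (∀ i, 1 ≤ i → i ≤ n → q.1 i * q.2.1 i = 0) ∧
  2 * (∑ i ∈ Finset.Icc 1 (n-1), q.2.2 i)
    + (∑ i ∈ Finset.Icc 1 n, (q.1 i + q.2.1 i)) = (l : ℤ)

/-- The map `Φ : Y^(l) → B^(l)`:  `x_i = y_i + y*_i` for `1 ≤ i ≤ n-1` (with the
conventions `y*_1 = y*_{01}`, `y*_{n-1} = y*_{n-1,n}`), `x_n = y_n`; similarly for `x̄`. -/
def PhiMap (n : ℕ) (q : YElt) : DElt :=
  (fun i => if 1 ≤ i ∧ i ≤ n - 1 then q.1 i + q.2.2 i else if i = n then q.1 n else 0,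
   fun i => if 1 ≤ i ∧ i ≤ n - 1 then q.2.1 i + q.2.2 i else if i = n then q.2.1 n else 0)

/-- The map `Ψ : B^(l) → Y^(l)`:  `y_i = (x_i - x̄_i)_+`, `ȳ_i = (x̄_i - x_i)_+` for
`1 ≤ i ≤ n-1`; `y_n = x_n`, `ȳ_n = x̄_n`; `y*_i = min(x_i, x̄_i)` for `1 ≤ i ≤ n-1`. -/
def PsiMap (n : ℕ) (p : DElt) : YElt :=
  (fun i => if 1 ≤ i ∧ i ≤ n - 1 then max 0 (p.1 i - p.2 i)
            else if i = n then p.1 n else 0,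
   fun i => if 1 ≤ i ∧ i ≤ n - 1 then max 0 (p.2 i - p.1 i)
            else if i = n then p.2 n else 0,
   fun i => if 1 ≤ i ∧ i ≤ n - 1 then min (p.1 i) (p.2 i) else 0)

private lemma aux_pp_mul (a b : ℤ) : max 0 (a - b) * max 0 (b - a) = 0 := by
  rcases le_total a b with h | h
  · have h1 : max 0 (a - b) = 0 := by omega
    rw [h1, zero_mul]
  · have h1 : max 0 (b - a) = 0 := by omega
    rw [h1, mul_zero]

/-- combinatorial core of Theorem 3.7: `Φ` and `Ψ` are well defined and
are mutually inverse bijections between `Y^(l)` and `B^(l)`. -/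
theorem stmt16 (n l : ℕ) (hn : 4 ≤ n) (hl : 1 ≤ l) :
    (∀ q, ymem n l q → dmem n l (PhiMap n q)) ∧
    (∀ p, dmem n l p → ymem n l (PsiMap n p)) ∧
    (∀ q, ymem n l q → PsiMap n (PhiMap n q) = q) ∧
    (∀ p, dmem n l p → PhiMap n (PsiMap n p) = p) := by
  obtain ⟨m, rfl⟩ : ∃ m, n = m + 1 := ⟨n - 1, by omega⟩
  have hm : 3 ≤ m := by omega
  have hc : ¬(1 ≤ m + 1 ∧ m + 1 ≤ m) := by omega
  refine ⟨?_, ?_, ?_, ?_⟩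
  · -- Phi well defined
    rintro q ⟨hnn, hstar, hz, hzstar, hprod, hsum⟩
    refine ⟨?_, ?_, ?_, ?_⟩
    · intro i hi1 hi2
      by_cases h : i ≤ m
      · have := hnn i hi1 (by omega)
        have := hstar i hi1 (by omega)
        simp only [PhiMap, Nat.add_sub_cancel]
        rw [if_pos ⟨hi1, h⟩, if_pos ⟨hi1, h⟩]
        omega
      · have hin : i = m + 1 := by omega
        subst hin
        have := hnn (m+1) hi1 hi2
        simp only [PhiMap, Nat.add_sub_cancel]
        simp only [ite_true, if_neg hc]
        omega
    · intro i hi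
      simp only [PhiMap, Nat.add_sub_cancel]
      rw [if_neg (by omega), if_neg (by omega), if_neg (by omega), if_neg (by omega)]
      exact ⟨rfl, rfl⟩
    · have := hprod (m + 1) (by omega) le_rfl
      simp only [PhiMap, Nat.add_sub_cancel]
      simp only [ite_true, if_neg hc]
      exact mul_eq_zero.1 this
    · have key : ∀ i ∈ Finset.Icc 1 m,
          (PhiMap (m+1) q).1 i + (PhiMap (m+1) q).2 i
            = (q.1 i + q.2.1 i) + 2 * q.2.2 i := by
        intro i hi
        rw [Finset.mem_Icc] at hi
        simp only [PhiMap, Nat.add_sub_cancel]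
        rw [if_pos ⟨hi.1, hi.2⟩, if_pos ⟨hi.1, hi.2⟩]
        ring
      rw [Finset.sum_Icc_succ_top (by omega : 1 ≤ m + 1),
        Finset.sum_congr rfl key]
      have etop : (PhiMap (m+1) q).1 (m+1) + (PhiMap (m+1) q).2 (m+1)
          = q.1 (m+1) + q.2.1 (m+1) := by
        simp only [PhiMap, Nat.add_sub_cancel]
        simp only [ite_true, if_neg hc]
      rw [etop]
      rw [Finset.sum_Icc_succ_top (by omega : 1 ≤ m + 1)] at hsum
      simp only [Finset.sum_add_distrib, Finset.mul_sum, Nat.add_sub_cancel] at *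
      linarith
  · -- Psi well defined
    rintro p ⟨hnn, hz, hor, hsum⟩
    refine ⟨?_, ?_, ?_, ?_, ?_, ?_⟩
    · intro i hi1 hi2
      by_cases h : i ≤ m
      · simp only [PsiMap, Nat.add_sub_cancel]
        rw [if_pos ⟨hi1, h⟩, if_pos ⟨hi1, h⟩]
        omega
      · have hin : i = m + 1 := by omega
        subst hin
        have := hnn (m+1) hi1 hi2
        simp only [PsiMap, Nat.add_sub_cancel]
        simp only [ite_true, if_neg hc]
        omega
    · intro i hi1 hi2
      have := hnn i hi1 (by omega)
      simp only [PsiMap, Nat.add_sub_cancel]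
      rw [if_pos ⟨hi1, by omega⟩]
      omega
    · intro i hi
      simp only [PsiMap, Nat.add_sub_cancel]
      rw [if_neg (by omega), if_neg (by omega), if_neg (by omega), if_neg (by omega)]
      exact ⟨rfl, rfl⟩
    · intro i hi
      simp only [PsiMap, Nat.add_sub_cancel]
      rw [if_neg (by omega)]
    · intro i hi1 hi2
      by_cases h : i ≤ m
      · simp only [PsiMap, Nat.add_sub_cancel]
        rw [if_pos ⟨hi1, h⟩, if_pos ⟨hi1, h⟩]
        exact aux_pp_mul _ _
      · have hin : i = m + 1 := by omega
        subst hin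
        simp only [PsiMap, Nat.add_sub_cancel]
        simp only [ite_true, if_neg hc]
        rcases hor with h | h
        · rw [h, zero_mul]
        · rw [h, mul_zero]
    · have key : ∀ i ∈ Finset.Icc 1 m,
          2 * (PsiMap (m+1) p).2.2 i
            + ((PsiMap (m+1) p).1 i + (PsiMap (m+1) p).2.1 i)
            = p.1 i + p.2 i := by
        intro i hi
        rw [Finset.mem_Icc] at hi
        simp only [PsiMap, Nat.add_sub_cancel]
        rw [if_pos ⟨hi.1, hi.2⟩, if_pos ⟨hi.1, hi.2⟩, if_pos ⟨hi.1, hi.2⟩]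
        omega
      have etop : (PsiMap (m+1) p).1 (m+1) + (PsiMap (m+1) p).2.1 (m+1)
          = p.1 (m+1) + p.2 (m+1) := by
        simp only [PsiMap, Nat.add_sub_cancel]
        simp only [ite_true, if_neg hc]
      rw [Finset.sum_Icc_succ_top (by omega : 1 ≤ m + 1), etop]
      rw [Finset.sum_Icc_succ_top (by omega : 1 ≤ m + 1)] at hsum
      have hk := Finset.sum_congr rfl key
      simp only [Finset.sum_add_distrib, Finset.mul_sum, Nat.add_sub_cancel] at *
      linarith
  · -- Psi ∘ Phi = id
    rintro q ⟨hnn, hstar, hz, hzstar, hprod, hsum⟩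
    have val : ∀ i, 1 ≤ i → i ≤ m →
        (PhiMap (m+1) q).1 i = q.1 i + q.2.2 i ∧
        (PhiMap (m+1) q).2 i = q.2.1 i + q.2.2 i := by
      intro i h1 h2
      simp only [PhiMap, Nat.add_sub_cancel]
      rw [if_pos ⟨h1, h2⟩, if_pos ⟨h1, h2⟩]
      exact ⟨rfl, rfl⟩
    have vtop : (PhiMap (m+1) q).1 (m+1) = q.1 (m+1) ∧
        (PhiMap (m+1) q).2 (m+1) = q.2.1 (m+1) := by
      simp only [PhiMap, Nat.add_sub_cancel]
      simp only [ite_true, if_neg hc]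
      exact ⟨trivial, trivial⟩
    refine Prod.ext ?_ (Prod.ext ?_ ?_)
    · funext i
      by_cases h : 1 ≤ i ∧ i ≤ m
      · obtain ⟨e1, e2⟩ := val i h.1 h.2
        have hy := hnn i h.1 (by omega)
        have hp := hprod i h.1 (by omega)
        simp only [PsiMap, Nat.add_sub_cancel]
        rw [if_pos h, e1, e2]
        rcases mul_eq_zero.1 hp with h0 | h0 <;> omega
      · by_cases hin : i = m + 1
        · subst hin
          simp only [PsiMap, Nat.add_sub_cancel]
          simp only [ite_true, if_neg hc]
          exact vtop.1
        · have := (hz i (by omega)).1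
          simp only [PsiMap, Nat.add_sub_cancel]
          rw [if_neg h, if_neg hin, this]
    · funext i
      by_cases h : 1 ≤ i ∧ i ≤ m
      · obtain ⟨e1, e2⟩ := val i h.1 h.2
        have hy := hnn i h.1 (by omega)
        have hp := hprod i h.1 (by omega)
        simp only [PsiMap, Nat.add_sub_cancel]
        rw [if_pos h, e1, e2]
        rcases mul_eq_zero.1 hp with h0 | h0 <;> omega
      · by_cases hin : i = m + 1
        · subst hin
          simp only [PsiMap, Nat.add_sub_cancel]
          simp only [ite_true, if_neg hc]
          exact vtop.2
        · have := (hz i (by omega)).2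
          simp only [PsiMap, Nat.add_sub_cancel]
          rw [if_neg h, if_neg hin, this]
    · funext i
      by_cases h : 1 ≤ i ∧ i ≤ m
      · obtain ⟨e1, e2⟩ := val i h.1 h.2
        have hy := hnn i h.1 (by omega)
        have hs := hstar i h.1 (by omega)
        have hp := hprod i h.1 (by omega)
        simp only [PsiMap, Nat.add_sub_cancel]
        rw [if_pos h, e1, e2]
        rcases mul_eq_zero.1 hp with h0 | h0 <;> omega
      · have := hzstar i (by omega)
        simp only [PsiMap, Nat.add_sub_cancel]
        rw [if_neg h, this]
  · -- Phi ∘ Psi = id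
    rintro p ⟨hnn, hz, hor, hsum⟩
    have val : ∀ i, 1 ≤ i → i ≤ m →
        (PsiMap (m+1) p).1 i = max 0 (p.1 i - p.2 i) ∧
        (PsiMap (m+1) p).2.1 i = max 0 (p.2 i - p.1 i) ∧
        (PsiMap (m+1) p).2.2 i = min (p.1 i) (p.2 i) := by
      intro i h1 h2
      simp only [PsiMap, Nat.add_sub_cancel]
      rw [if_pos ⟨h1, h2⟩, if_pos ⟨h1, h2⟩, if_pos ⟨h1, h2⟩]
      exact ⟨rfl, rfl, rfl⟩
    have vtop : (PsiMap (m+1) p).1 (m+1) = p.1 (m+1) ∧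
        (PsiMap (m+1) p).2.1 (m+1) = p.2 (m+1) := by
      simp only [PsiMap, Nat.add_sub_cancel]
      simp only [ite_true, if_neg hc]
      exact ⟨trivial, trivial⟩
    refine Prod.ext ?_ ?_
    · funext i
      by_cases h : 1 ≤ i ∧ i ≤ m
      · obtain ⟨e1, e2, e3⟩ := val i h.1 h.2
        simp only [PhiMap, Nat.add_sub_cancel]
        rw [if_pos h, e1, e3]
        omega
      · by_cases hin : i = m + 1
        · subst hin
          simp only [PhiMap, Nat.add_sub_cancel]
          simp only [ite_true, if_neg hc]
          exact vtop.1
        · have := (hz i (by omega)).1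
          simp only [PhiMap, Nat.add_sub_cancel]
          rw [if_neg h, if_neg hin, this]
    · funext i
      by_cases h : 1 ≤ i ∧ i ≤ m
      · obtain ⟨e1, e2, e3⟩ := val i h.1 h.2
        simp only [PhiMap, Nat.add_sub_cancel]
        rw [if_pos h, e2, e3]
        omega
      · by_cases hin : i = m + 1
        · subst hin
          simp only [PhiMap, Nat.add_sub_cancel]
          simp only [ite_true, if_neg hc]
          exact vtop.2
        · have := (hz i (by omega)).2
          simp only [PhiMap, Nat.add_sub_cancel]
          rw [if_neg h, if_neg hin, this]
end

section
/- Let σ : B^(l) → B^(l) be the map interchanging the entries x_1 and x̄_1 and fixing all other entries. Then σ is a well-defined involution of B^(l) satisfying: ε_0 ∘ σ = ε_1, φ_0 ∘ σ = φ_1, ε_1 ∘ σ = ε_0, φ_1 ∘ σ = φ_0, and ε_i ∘ σ = ε_i, φ_i ∘ σ = φ_i for 2 ≤ i ≤ n; moreover σ(f̃_0 b) = f̃_1(σ b), σ(ẽ_0 b) = ẽ_1(σ b), and σ(f̃_i b) = f̃_i(σ b), σ(ẽ_i b) = ẽ_i(σ b) for all 2 ≤ i ≤ n and all b ∈ B^(l)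 (with the convention σ(0) = 0). -/
/-- The map `σ` interchanging the entries `x_1` and `x̄_1`. -/
def sigmaMap (p : DElt) : DElt :=
  (Function.update p.1 1 (p.2 1), Function.update p.2 1 (p.1 1))

set_option maxHeartbeats 4000000 in
/-- `σ` is a well-defined involution of `B^(l)` with
`ε_0 ∘ σ = ε_1`, `φ_0 ∘ σ = φ_1`, `ε_1 ∘ σ = ε_0`, `φ_1 ∘ σ = φ_0`, and
`ε_i ∘ σ = ε_i`, `φ_i ∘ σ = φ_i` for `2 ≤ i ≤ n`; moreover `σ(f̃_0 b) = f̃_1(σ b)`,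
`σ(ẽ_0 b) = ẽ_1(σ b)`, and `σ(f̃_i b) = f̃_i(σ b)`, `σ(ẽ_i b) = ẽ_i(σ b)` for
`2 ≤ i ≤ n` and all `b ∈ B^(l)` (the convention `σ(0) = 0` is automatic in the total
encoding of the Kashiwara operators). -/
theorem stmt17 (n l : ℕ) (hn : 4 ≤ n) (hl : 1 ≤ l) :
    (∀ p, dmem n l p → dmem n l (sigmaMap p)) ∧
    (∀ p, dmem n l p → sigmaMap (sigmaMap p) = p) ∧
    (∀ p, dmem n l p →
      deps n 0 (sigmaMap p) = deps n 1 p ∧ dphi n 0 (sigmaMap p) = dphi n 1 p ∧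
      deps n 1 (sigmaMap p) = deps n 0 p ∧ dphi n 1 (sigmaMap p) = dphi n 0 p ∧
      (∀ i, 2 ≤ i → i ≤ n →
        deps n i (sigmaMap p) = deps n i p ∧ dphi n i (sigmaMap p) = dphi n i p)) ∧
    (∀ p, dmem n l p →
      sigmaMap (ftilde n 0 p) = ftilde n 1 (sigmaMap p) ∧
      sigmaMap (etilde n 0 p) = etilde n 1 (sigmaMap p) ∧
      (∀ i, 2 ≤ i → i ≤ n →
        sigmaMap (ftilde n i p) = ftilde n i (sigmaMap p) ∧
        sigmaMap (etilde n i p) = etilde n i (sigmaMap p))) := by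

  have hn2 : (1:ℕ) ≤ n - 2 := by omega
  have key : ∀ p : DElt, ∀ j, j ≠ 1 → (sigmaMap p).1 j = p.1 j ∧ (sigmaMap p).2 j = p.2 j := by
    intro p j hj
    simp [sigmaMap, Function.update_apply, hj]
  refine ⟨?_, ?_, ?_, ?_⟩
  · rintro p ⟨hv, hz, hxn, hs⟩
    refine ⟨?_, ?_, ?_, ?_⟩
    · intro i h1 h2
      by_cases h : i = 1
      · subst h
        have := hv 1 (le_refl _) h2
        simp [sigmaMap]
        exact ⟨this.2, this.1⟩
      · rw [(key p i h).1, (key p i h).2]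
        exact hv i h1 h2
    · intro i hi
      have h : i ≠ 1 := by omega
      rw [(key p i h).1, (key p i h).2]
      exact hz i hi
    · have h : n ≠ 1 := by omega
      rw [(key p n h).1, (key p n h).2]
      exact hxn
    · rw [← hs]
      apply Finset.sum_congr rfl
      intro i _
      by_cases h : i = 1
      · subst h; simp [sigmaMap]; ring
      · rw [(key p i h).1, (key p i h).2]
  · intro p _
    refine Prod.ext ?_ ?_ <;> funext x <;>
      simp [sigmaMap, Function.update_apply] <;> split_ifs <;> subst_vars <;> simp
  · intro p _
    refine ⟨?_, ?_, ?_, ?_, ?_⟩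
    · simp [deps, sigmaMap, Function.update_apply, hn2, (by omega : ¬ (1:ℕ) = 0)]
    · simp [dphi, sigmaMap, Function.update_apply, hn2, (by omega : ¬ (1:ℕ) = 0)]
    · simp [deps, sigmaMap, Function.update_apply, hn2, (by omega : ¬ (1:ℕ) = 0)]
    · simp [dphi, sigmaMap, Function.update_apply, hn2, (by omega : ¬ (1:ℕ) = 0)]
    · intro i h2 hni
      have e1 : ¬ i = 0 := by omega
      have e2 : i ≠ 1 := by omega
      have e3 : i + 1 ≠ 1 := by omega
      have e4 : n - 1 ≠ 1 := by omega
      have e5 : n ≠ 1 := by omega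
      constructor <;>
        simp [deps, dphi, sigmaMap, Function.update_apply, e1, e2, e3, e4, e5]
  · intro p _
    refine ⟨?_, ?_, ?_⟩
    · refine Prod.ext ?_ ?_ <;> funext x <;>
        simp only [sigmaMap, ftilde, Function.update_apply, apply_ite Prod.fst,
          apply_ite Prod.snd, ite_apply, show (1:ℕ)+1 = 2 from rfl] <;>
        split_ifs <;> subst_vars <;> first | omega | (exfalso; assumption)
    · refine Prod.ext ?_ ?_ <;> funext x <;>
        simp only [sigmaMap, etilde, Function.update_apply, apply_ite Prod.fst,
          apply_ite Prod.snd, ite_apply, show (1:ℕ)+1 = 2 from rfl] <;>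
        split_ifs <;> subst_vars <;> first | omega | (exfalso; assumption)
    · intro i h2 hni
      have hi0 : ¬ i = 0 := by omega
      by_cases hA : i ≤ n - 2
      · constructor <;>
          · refine Prod.ext ?_ ?_ <;> funext x <;>
              simp only [sigmaMap, ftilde, etilde, Function.update_apply, apply_ite Prod.fst,
                apply_ite Prod.snd, ite_apply, hi0, hA, if_false, if_true] <;>
              split_ifs <;> subst_vars <;> first | omega | (exfalso; assumption)
      · by_cases hB : i = n - 1 <;>
          · constructor <;>
              · refine Prod.ext ?_ ?_ <;> funext x <;>
                  simp only [sigmaMap, ftilde, etilde, Function.update_apply, apply_ite Prod.fst,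
                    apply_ite Prod.snd, ite_apply, hi0, hA, hB, if_false, if_true] <;>
                  split_ifs <;> subst_vars <;> first | omega | (exfalso; assumption)
end

section
/- Let τ : B^(l) → B^(l) be the map interchanging the entries x_n and x̄_n and fixing all other entries. Then τ is a well-defined involution of B^(l) satisfying: ε_{n−1} ∘ τ = ε_n, φ_{n−1} ∘ τ = φ_n, ε_n ∘ τ = ε_{n−1}, φ_n ∘ τ = φ_{n−1}, and ε_i ∘ τ = ε_i, φ_i ∘ τ = φ_i for 0 ≤ i ≤ n−2; moreover τ(f̃_{n−1} b) = f̃_n(τ b), τ(ẽ_{n−1} b) = ẽ_n(τ b), and τ(f̃_i b) = f̃_i(τ b), τ(ẽ_i b) = ẽ_i(τ b) for all 0 ≤ i ≤ n−2 and all b ∈ B^(l) (with the convention τ(0) = 0). -/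
/-- The map `τ` interchanging the entries `x_n` and `x̄_n`. -/
def tauMap (n : ℕ) (p : DElt) : DElt :=
  (Function.update p.1 n (p.2 n), Function.update p.2 n (p.1 n))

set_option maxHeartbeats 4000000 in
/-- `τ` is a well-defined involution of `B^(l)` with
`ε_{n-1} ∘ τ = ε_n`, `φ_{n-1} ∘ τ = φ_n`, `ε_n ∘ τ = ε_{n-1}`, `φ_n ∘ τ = φ_{n-1}`, and
`ε_i ∘ τ = ε_i`, `φ_i ∘ τ = φ_i` for `0 ≤ i ≤ n-2`; moreover `τ(f̃_{n-1} b) = f̃_n(τ b)`,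
`τ(ẽ_{n-1} b) = ẽ_n(τ b)`, and `τ(f̃_i b) = f̃_i(τ b)`, `τ(ẽ_i b) = ẽ_i(τ b)` for
`0 ≤ i ≤ n-2` and all `b ∈ B^(l)` (the convention `τ(0) = 0` is automatic in the total
encoding of the Kashiwara operators). -/
theorem stmt18 (n l : ℕ) (hn : 4 ≤ n) (hl : 1 ≤ l) :
    (∀ p, dmem n l p → dmem n l (tauMap n p)) ∧
    (∀ p, dmem n l p → tauMap n (tauMap n p) = p) ∧
    (∀ p, dmem n l p →
      deps n (n-1) (tauMap n p) = deps n n p ∧ dphi n (n-1) (tauMap n p) = dphi n n p ∧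
      deps n n (tauMap n p) = deps n (n-1) p ∧ dphi n n (tauMap n p) = dphi n (n-1) p ∧
      (∀ i, i ≤ n - 2 →
        deps n i (tauMap n p) = deps n i p ∧ dphi n i (tauMap n p) = dphi n i p)) ∧
    (∀ p, dmem n l p →
      tauMap n (ftilde n (n-1) p) = ftilde n n (tauMap n p) ∧
      tauMap n (etilde n (n-1) p) = etilde n n (tauMap n p) ∧
      (∀ i, i ≤ n - 2 →
        tauMap n (ftilde n i p) = ftilde n i (tauMap n p) ∧
        tauMap n (etilde n i p) = etilde n i (tauMap n p))) := by
  refine ⟨?_, ?_, ?_, ?_⟩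
  · rintro p ⟨hv, hz, hx, hs⟩
    refine ⟨?_, ?_, ?_, ?_⟩
    · intro i h1 h2
      have h3 := hv i h1 h2
      have h4 := hv n (by omega) le_rfl
      simp only [tauMap, Function.update_apply]
      split_ifs with h
      · exact ⟨h4.2, h4.1⟩
      · exact h3
    · intro i hi
      have h3 := hz i hi
      have hin : i ≠ n := by omega
      simp only [tauMap, Function.update_apply, if_neg hin]
      exact h3
    · simp only [tauMap, Function.update_self]
      exact hx.symm
    · rw [← hs]
      refine Finset.sum_congr rfl ?_
      intro i _
      simp only [tauMap, Function.update_apply]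
      split_ifs with h
      · subst h; ring
      · rfl
  · intro p _
    ext j <;> simp only [tauMap, Function.update_apply, Function.update_self] <;>
      split_ifs with h <;> simp [h]
  · intro p _
    have h1 : n - 1 ≠ 0 := by omega
    have h2 : ¬ (n - 1 ≤ n - 2) := by omega
    have h3 : ¬ (n ≤ n - 2) := by omega
    have h4 : n ≠ 0 := by omega
    have h5 : n ≠ n - 1 := by omega
    refine ⟨?_, ?_, ?_, ?_, ?_⟩
    · simp only [deps, tauMap, Function.update_apply, if_neg h1, if_neg h2, if_pos rfl,
        if_neg h4, if_neg h3, if_neg h5]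
      (try split_ifs) <;> first | rfl | omega | (exfalso; omega)
    · simp only [dphi, tauMap, Function.update_apply, if_neg h1, if_neg h2, if_pos rfl,
        if_neg h4, if_neg h3, if_neg h5]
      (try split_ifs) <;> first | rfl | omega | (exfalso; omega)
    · simp only [deps, tauMap, Function.update_apply, if_neg h1, if_neg h2, if_pos rfl,
        if_neg h4, if_neg h3, if_neg h5]
      (try split_ifs) <;> first | rfl | omega | (exfalso; omega)
    · simp only [dphi, tauMap, Function.update_apply, if_neg h1, if_neg h2, if_pos rfl,
        if_neg h4, if_neg h3, if_neg h5]
      (try split_ifs) <;> first | rfl | omega | (exfalso; omega)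
    · intro i hi
      constructor <;>
        simp only [deps, dphi, tauMap, Function.update_apply] <;>
        split_ifs <;>
        (try simp only [Prod.fst, Prod.snd, Function.update_apply]) <;> (try split_ifs) <;>
        first | rfl | omega | (exfalso; omega)
  · intro p hp
    obtain ⟨hv, _, hx, _⟩ := hp
    have hnn := hv n (by omega) le_rfl
    have h1 : n - 1 ≠ 0 := by omega
    have h2 : ¬ (n - 1 ≤ n - 2) := by omega
    have h3 : ¬ (n ≤ n - 2) := by omega
    have h4 : n ≠ 0 := by omega
    have h5 : n ≠ n - 1 := by omega
    refine ⟨?_, ?_, ?_⟩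
    · ext j <;>
        simp only [ftilde, tauMap, Function.update_apply, if_neg h1, if_neg h2, if_pos rfl,
          if_neg h4, if_neg h3, if_neg h5] <;>
        split_ifs <;>
        (try simp only [Prod.fst, Prod.snd, Function.update_apply]) <;> (try split_ifs) <;>
        first | rfl | omega | (exfalso; omega)
    · ext j <;>
        simp only [etilde, tauMap, Function.update_apply, if_neg h1, if_neg h2, if_pos rfl,
          if_neg h4, if_neg h3, if_neg h5] <;>
        split_ifs <;>
        (try simp only [Prod.fst, Prod.snd, Function.update_apply]) <;> (try split_ifs) <;>
        first | rfl | omega | (exfalso; omega)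
    · intro i hi
      refine ⟨?_, ?_⟩ <;>
        ext j <;>
        simp only [ftilde, etilde, tauMap, Function.update_apply] <;>
        split_ifs <;>
        (try simp only [Prod.fst, Prod.snd, Function.update_apply]) <;> (try split_ifs) <;>
        first | rfl | omega | (exfalso; omega)
end

section
/- For every b ∈ B^(l), every i ∈ I, and every k ∈ ℕ: the k-fold iterate f̃_i^k b is a nonzero element of B^(l) if and only if k ≤ φ_i(b), and the k-fold iterate ẽ_i^k b is a nonzero element of B^(l) if and only if k ≤ ε_i(b). In particular φ_i(b) = max{k ∈ ℕ : f̃_i^k b ≠ 0} and ε_i(b) = max{k ∈ ℕ : ẽ_i^k b ≠ 0}. -/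
lemma pPart_nonneg (x : ℤ) : 0 ≤ pPart x := le_max_left 0 x

lemma pPart_of_nonpos {x : ℤ} (h : x ≤ 0) : pPart x = 0 := max_eq_left h

lemma pPart_of_nonneg {x : ℤ} (h : 0 ≤ x) : pPart x = x := max_eq_right h

lemma dvalid_of (n : ℕ) (p : DElt) (Q1 Q2 : ℕ → ℤ) (hv : dvalid n p) (a b : ℕ)
    (hq : ∀ j, j ≠ a → j ≠ b → Q1 j = p.1 j ∧ Q2 j = p.2 j)
    (hA : 0 ≤ Q1 a ∧ 0 ≤ Q2 a) (hB : 0 ≤ Q1 b ∧ 0 ≤ Q2 b) : dvalid n (Q1, Q2) := by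
  intro j h1 h2
  rcases eq_or_ne j a with rfl | hja
  · exact hA
  rcases eq_or_ne j b with rfl | hjb
  · exact hB
  obtain ⟨e1, e2⟩ := hq j hja hjb
  refine ⟨?_, ?_⟩
  · show 0 ≤ Q1 j
    rw [e1]; exact (hv j h1 h2).1
  · show 0 ≤ Q2 j
    rw [e2]; exact (hv j h1 h2).2

lemma mem_of_step (n l : ℕ) (p : DElt) (Q1 Q2 : ℕ → ℤ)
    (hz : ∀ i, i = 0 ∨ n < i → p.1 i = 0 ∧ p.2 i = 0)
    (hs : (∑ i ∈ Finset.Icc 1 n, (p.1 i + p.2 i)) = (l : ℤ))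
    (a b : ℕ) (ha1 : 1 ≤ a) (han : a ≤ n) (hb1 : 1 ≤ b) (hbn : b ≤ n) (hab : a ≠ b)
    (hq : ∀ j, j ≠ a → j ≠ b → Q1 j = p.1 j ∧ Q2 j = p.2 j)
    (hsum : Q1 a + Q2 a + (Q1 b + Q2 b) = p.1 a + p.2 a + (p.1 b + p.2 b))
    (hval : dvalid n (Q1, Q2)) (hor : Q1 n = 0 ∨ Q2 n = 0) :
    dmem n l (Q1, Q2) := by
  refine ⟨hval, fun j hj => ?_, hor, ?_⟩
  · obtain ⟨h1, h2⟩ := hq j (by omega) (by omega)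
    exact ⟨h1.trans (hz j hj).1, h2.trans (hz j hj).2⟩
  · have hamem : a ∈ Finset.Icc 1 n := Finset.mem_Icc.mpr ⟨ha1, han⟩
    have hbmem : b ∈ (Finset.Icc 1 n).erase a :=
      Finset.mem_erase.mpr ⟨fun h => hab h.symm, Finset.mem_Icc.mpr ⟨hb1, hbn⟩⟩
    have key : ∀ F1 F2 : ℕ → ℤ, (∑ j ∈ Finset.Icc 1 n, (F1 j + F2 j))
        = (F1 a + F2 a) + ((F1 b + F2 b)
            + ∑ j ∈ ((Finset.Icc 1 n).erase a).erase b, (F1 j + F2 j)) := by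
      intro F1 F2
      rw [← Finset.add_sum_erase _ (fun j => F1 j + F2 j) hamem,
        ← Finset.add_sum_erase _ (fun j => F1 j + F2 j) hbmem]
    have hE : ∑ j ∈ ((Finset.Icc 1 n).erase a).erase b, (Q1 j + Q2 j)
        = ∑ j ∈ ((Finset.Icc 1 n).erase a).erase b, (p.1 j + p.2 j) := by
      refine Finset.sum_congr rfl fun j hj => ?_
      simp only [Finset.mem_erase] at hj
      obtain ⟨h1, h2⟩ := hq j hj.2.1 hj.1
      rw [h1, h2]
    show (∑ j ∈ Finset.Icc 1 n, (Q1 j + Q2 j)) = (l : ℤ)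
    rw [key Q1 Q2] at *
    rw [key p.1 p.2] at hs
    omega

lemma dphi_deps_nonneg (n : ℕ) (hn : 4 ≤ n) (i : ℕ) (hi : i ≤ n) (p : DElt)
    (hv : dvalid n p) : 0 ≤ dphi n i p ∧ 0 ≤ deps n i p := by
  have h1 := hv 1 (by omega) (by omega)
  have hn1 := hv (n-1) (by omega) (by omega)
  have hnn := hv n (by omega) (by omega)
  unfold dphi deps
  split_ifs with h0 hle hm
  · have := pPart_nonneg (p.2 2 - p.1 2)
    have := pPart_nonneg (p.1 2 - p.2 2)
    omega
  · have := hv i (by omega) (by omega)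
    have := pPart_nonneg (p.2 (i+1) - p.1 (i+1))
    have := pPart_nonneg (p.1 (i+1) - p.2 (i+1))
    omega
  · omega
  · omega

lemma iter_key (n : ℕ) (f : DElt → DElt) (φ : DElt → ℤ) (M : DElt → Prop)
    (h0 : ∀ p, M p → 0 ≤ φ p)
    (hA : ∀ p, M p → (dvalid n (f p) ↔ 1 ≤ φ p))
    (hB : ∀ p, M p → 1 ≤ φ p → M (f p) ∧ φ (f p) = φ p - 1) :
    ∀ k p, M p →
      (((∀ j, 1 ≤ j → j ≤ k → dvalid n (f^[j] p)) ∧ M (f^[k] p)) ↔ (k : ℤ) ≤ φ p) := by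
  intro k
  induction k with
  | zero =>
    intro p hM
    simp only [Nat.cast_zero, Function.iterate_zero_apply]
    exact ⟨fun _ => h0 p hM, fun _ => ⟨fun j hj1 hj2 => absurd hj2 (by omega), hM⟩⟩
  | succ k ih =>
    intro p hM
    constructor
    · rintro ⟨hval, hmem⟩
      have h1 : dvalid n (f p) := by
        have := hval 1 (by omega) (by omega)
        rwa [Function.iterate_one] at this
      have hφ : 1 ≤ φ p := (hA p hM).1 h1
      obtain ⟨hM', hφ'⟩ := hB p hM hφ
      have hk : (k : ℤ) ≤ φ (f p) := by
        refine (ih (f p) hM').1 ⟨fun j hj1 hj2 => ?_, ?_⟩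
        · have := hval (j+1) (by omega) (by omega)
          rwa [Function.iterate_succ_apply] at this
        · rwa [Function.iterate_succ_apply] at hmem
      push_cast
      omega
    · intro h
      have hφ : 1 ≤ φ p := by push_cast at h; omega
      obtain ⟨hM', hφ'⟩ := hB p hM hφ
      have hk : (k : ℤ) ≤ φ (f p) := by push_cast at h; omega
      obtain ⟨hval, hmem⟩ := (ih (f p) hM').2 hk
      refine ⟨fun j hj1 hj2 => ?_, by rwa [Function.iterate_succ_apply]⟩
      rcases j with _ | j
      · omega
      · rw [Function.iterate_succ_apply]
        rcases Nat.eq_zero_or_pos j with rfl | hj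
        · rw [Function.iterate_zero_apply]
          exact (hA p hM).mpr hφ
        · exact hval j (by omega) (by omega)



lemma key_f (n l : ℕ) (hn : 4 ≤ n) (i : ℕ) (hi : i ≤ n) (p : DElt) (hp : dmem n l p) :
    (dvalid n (ftilde n i p) ↔ 1 ≤ dphi n i p) ∧
      (1 ≤ dphi n i p →
        dmem n l (ftilde n i p) ∧ dphi n i (ftilde n i p) = dphi n i p - 1) := by
  obtain ⟨hv, hz, hor, hs⟩ := hp
  by_cases hi0 : i = 0
  · subst hi0
    have e1 := hv 1 (by omega) (by omega)
    have e2 := hv 2 (by omega) (by omega)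
    have hd : ∀ Q1 Q2 : ℕ → ℤ, dphi n 0 (Q1, Q2) = Q2 1 + pPart (Q2 2 - Q1 2) :=
      fun _ _ => rfl
    have hdp : dphi n 0 p = p.2 1 + pPart (p.2 2 - p.1 2) := rfl
    by_cases hc : p.2 2 ≤ p.1 2
    · have hft : ftilde n 0 p
          = (Function.update p.1 2 (p.1 2 + 1), Function.update p.2 1 (p.2 1 - 1)) := by
        unfold ftilde; rw [if_pos rfl, if_pos hc]
      have v11 : Function.update p.1 2 (p.1 2 + 1) 1 = p.1 1 :=
        Function.update_of_ne (by omega) _ _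
      have v12 : Function.update p.1 2 (p.1 2 + 1) 2 = p.1 2 + 1 :=
        Function.update_self _ _ _
      have v21 : Function.update p.2 1 (p.2 1 - 1) 1 = p.2 1 - 1 :=
        Function.update_self _ _ _
      have v22 : Function.update p.2 1 (p.2 1 - 1) 2 = p.2 2 :=
        Function.update_of_ne (by omega) _ _
      have v1n : Function.update p.1 2 (p.1 2 + 1) n = p.1 n :=
        Function.update_of_ne (by omega) _ _
      have v2n : Function.update p.2 1 (p.2 1 - 1) n = p.2 n :=
        Function.update_of_ne (by omega) _ _
      have hP : pPart (p.2 2 - p.1 2) = 0 := pPart_of_nonpos (by omega)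
      have hq : ∀ j, j ≠ 1 → j ≠ 2 → Function.update p.1 2 (p.1 2 + 1) j = p.1 j ∧
          Function.update p.2 1 (p.2 1 - 1) j = p.2 j :=
        fun j h1 h2 => ⟨Function.update_of_ne h2 _ _, Function.update_of_ne h1 _ _⟩
      rw [hft]
      have hval : 1 ≤ dphi n 0 p → dvalid n
          (Function.update p.1 2 (p.1 2 + 1), Function.update p.2 1 (p.2 1 - 1)) :=
        fun h1 => dvalid_of n p _ _ hv 1 2 hq ⟨by omega, by omega⟩ ⟨by omega, by omega⟩
      refine ⟨⟨fun h => ?_, hval⟩, fun h1 => ⟨mem_of_step n l p _ _ hz hs 1 2 (by omega)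
        (by omega) (by omega) (by omega) (by omega) hq (by omega) (hval h1) (by omega), ?_⟩⟩
      · have h21 : (0:ℤ) ≤ Function.update p.2 1 (p.2 1 - 1) 1 := (h 1 (by omega) (by omega)).2
        omega
      · rw [hd, v21, v22, v12, pPart_of_nonpos] <;> omega
    · have hft : ftilde n 0 p
          = (Function.update p.1 1 (p.1 1 + 1), Function.update p.2 2 (p.2 2 - 1)) := by
        unfold ftilde; rw [if_pos rfl, if_neg hc]
      have v11 : Function.update p.1 1 (p.1 1 + 1) 1 = p.1 1 + 1 :=
        Function.update_self _ _ _
      have v12 : Function.update p.1 1 (p.1 1 + 1) 2 = p.1 2 :=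
        Function.update_of_ne (by omega) _ _
      have v21 : Function.update p.2 2 (p.2 2 - 1) 1 = p.2 1 :=
        Function.update_of_ne (by omega) _ _
      have v22 : Function.update p.2 2 (p.2 2 - 1) 2 = p.2 2 - 1 :=
        Function.update_self _ _ _
      have v1n : Function.update p.1 1 (p.1 1 + 1) n = p.1 n :=
        Function.update_of_ne (by omega) _ _
      have v2n : Function.update p.2 2 (p.2 2 - 1) n = p.2 n :=
        Function.update_of_ne (by omega) _ _
      have hP : pPart (p.2 2 - p.1 2) = p.2 2 - p.1 2 := pPart_of_nonneg (by omega)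
      have hq : ∀ j, j ≠ 1 → j ≠ 2 → Function.update p.1 1 (p.1 1 + 1) j = p.1 j ∧
          Function.update p.2 2 (p.2 2 - 1) j = p.2 j :=
        fun j h1 h2 => ⟨Function.update_of_ne h1 _ _, Function.update_of_ne h2 _ _⟩
      rw [hft]
      have hval : 1 ≤ dphi n 0 p → dvalid n
          (Function.update p.1 1 (p.1 1 + 1), Function.update p.2 2 (p.2 2 - 1)) :=
        fun h1 => dvalid_of n p _ _ hv 1 2 hq ⟨by omega, by omega⟩ ⟨by omega, by omega⟩
      refine ⟨⟨fun _ => by omega, hval⟩, fun h1 => ⟨mem_of_step n l p _ _ hz hs 1 2 (by omega)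
        (by omega) (by omega) (by omega) (by omega) hq (by omega) (hval h1) (by omega), ?_⟩⟩
      rw [hd, v21, v22, v12, pPart_of_nonneg] <;> omega
  by_cases hile : i ≤ n - 2
  · have hi1 : 1 ≤ i := by omega
    have ei := hv i (by omega) (by omega)
    have ei1 := hv (i+1) (by omega) (by omega)
    have hd : ∀ Q1 Q2 : ℕ → ℤ,
        dphi n i (Q1, Q2) = Q1 i + pPart (Q2 (i+1) - Q1 (i+1)) := fun _ _ => by
      simp only [dphi, if_neg hi0, if_pos hile]
    have hdp : dphi n i p = p.1 i + pPart (p.2 (i+1) - p.1 (i+1)) := by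
      simp only [dphi, if_neg hi0, if_pos hile]
    by_cases hc : p.2 (i+1) ≤ p.1 (i+1)
    · have hft : ftilde n i p
          = (Function.update (Function.update p.1 i (p.1 i - 1)) (i+1) (p.1 (i+1) + 1), p.2) := by
        unfold ftilde; rw [if_neg hi0, if_pos hile, if_pos hc]
      have va : Function.update (Function.update p.1 i (p.1 i - 1)) (i+1) (p.1 (i+1) + 1) i
          = p.1 i - 1 := by
        rw [Function.update_of_ne (by omega), Function.update_self]
      have vb : Function.update (Function.update p.1 i (p.1 i - 1)) (i+1) (p.1 (i+1) + 1) (i+1)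
          = p.1 (i+1) + 1 := Function.update_self _ _ _
      have v1n : Function.update (Function.update p.1 i (p.1 i - 1)) (i+1) (p.1 (i+1) + 1) n
          = p.1 n := by
        rw [Function.update_of_ne (by omega), Function.update_of_ne (by omega)]
      have hP : pPart (p.2 (i+1) - p.1 (i+1)) = 0 := pPart_of_nonpos (by omega)
      have hq : ∀ j, j ≠ i → j ≠ i+1 →
          Function.update (Function.update p.1 i (p.1 i - 1)) (i+1) (p.1 (i+1) + 1) j = p.1 j ∧
          p.2 j = p.2 j := fun j h1 h2 =>
        ⟨by rw [Function.update_of_ne h2, Function.update_of_ne h1], rfl⟩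
      rw [hft]
      have hval : 1 ≤ dphi n i p → dvalid n
          (Function.update (Function.update p.1 i (p.1 i - 1)) (i+1) (p.1 (i+1) + 1), p.2) :=
        fun h1 => dvalid_of n p _ _ hv i (i+1) hq ⟨by omega, by omega⟩ ⟨by omega, by omega⟩
      refine ⟨⟨fun h => ?_, hval⟩, fun h1 => ⟨mem_of_step n l p _ _ hz hs i (i+1) (by omega)
        (by omega) (by omega) (by omega) (by omega) hq (by omega) (hval h1) (by omega), ?_⟩⟩
      · have h1i : (0:ℤ) ≤ Function.update (Function.update p.1 i (p.1 i - 1)) (i+1)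
            (p.1 (i+1) + 1) i := (h i (by omega) (by omega)).1
        omega
      · rw [hd, va, vb, pPart_of_nonpos] <;> omega
    · have hft : ftilde n i p
          = (p.1, Function.update (Function.update p.2 (i+1) (p.2 (i+1) - 1)) i (p.2 i + 1)) := by
        unfold ftilde; rw [if_neg hi0, if_pos hile, if_neg hc]
      have va : Function.update (Function.update p.2 (i+1) (p.2 (i+1) - 1)) i (p.2 i + 1) i
          = p.2 i + 1 := Function.update_self _ _ _
      have vb : Function.update (Function.update p.2 (i+1) (p.2 (i+1) - 1)) i (p.2 i + 1) (i+1)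
          = p.2 (i+1) - 1 := by
        rw [Function.update_of_ne (by omega), Function.update_self]
      have v2n : Function.update (Function.update p.2 (i+1) (p.2 (i+1) - 1)) i (p.2 i + 1) n
          = p.2 n := by
        rw [Function.update_of_ne (by omega), Function.update_of_ne (by omega)]
      have hP : pPart (p.2 (i+1) - p.1 (i+1)) = p.2 (i+1) - p.1 (i+1) :=
        pPart_of_nonneg (by omega)
      have hq : ∀ j, j ≠ i → j ≠ i+1 → p.1 j = p.1 j ∧
          Function.update (Function.update p.2 (i+1) (p.2 (i+1) - 1)) i (p.2 i + 1) j = p.2 j :=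
        fun j h1 h2 => ⟨rfl, by rw [Function.update_of_ne h1, Function.update_of_ne h2]⟩
      rw [hft]
      have hval : 1 ≤ dphi n i p → dvalid n
          (p.1, Function.update (Function.update p.2 (i+1) (p.2 (i+1) - 1)) i (p.2 i + 1)) :=
        fun h1 => dvalid_of n p _ _ hv i (i+1) hq ⟨by omega, by omega⟩ ⟨by omega, by omega⟩
      refine ⟨⟨fun _ => by omega, hval⟩, fun h1 => ⟨mem_of_step n l p _ _ hz hs i (i+1) (by omega)
        (by omega) (by omega) (by omega) (by omega) hq (by omega) (hval h1) (by omega), ?_⟩⟩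
      rw [hd, vb, pPart_of_nonneg] <;> omega
  have en1 := hv (n-1) (by omega) (by omega)
  have en := hv n (by omega) (by omega)
  by_cases hin1 : i = n - 1
  · subst hin1
    have hd : ∀ Q1 Q2 : ℕ → ℤ, dphi n (n-1) (Q1, Q2) = Q1 (n-1) + Q2 n := fun _ _ => by
      simp only [dphi, if_neg hi0, if_neg hile, eq_self_iff_true, if_true]
    have hdp : dphi n (n-1) p = p.1 (n-1) + p.2 n := by
      simp only [dphi, if_neg hi0, if_neg hile, eq_self_iff_true, if_true]
    by_cases hc : p.2 n = 0
    · have hft : ftilde n (n-1) p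
          = (Function.update (Function.update p.1 (n-1) (p.1 (n-1) - 1)) n (p.1 n + 1), p.2) := by
        unfold ftilde; simp only [if_neg hi0, if_neg hile, eq_self_iff_true, if_true, if_pos hc]
      have va : Function.update (Function.update p.1 (n-1) (p.1 (n-1) - 1)) n (p.1 n + 1) (n-1)
          = p.1 (n-1) - 1 := by
        rw [Function.update_of_ne (by omega), Function.update_self]
      have vb : Function.update (Function.update p.1 (n-1) (p.1 (n-1) - 1)) n (p.1 n + 1) n
          = p.1 n + 1 := Function.update_self _ _ _
      have hq : ∀ j, j ≠ n-1 → j ≠ n →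
          Function.update (Function.update p.1 (n-1) (p.1 (n-1) - 1)) n (p.1 n + 1) j = p.1 j ∧
          p.2 j = p.2 j := fun j h1 h2 =>
        ⟨by rw [Function.update_of_ne h2, Function.update_of_ne h1], rfl⟩
      rw [hft]
      have hval : 1 ≤ dphi n (n-1) p → dvalid n
          (Function.update (Function.update p.1 (n-1) (p.1 (n-1) - 1)) n (p.1 n + 1), p.2) :=
        fun h1 => dvalid_of n p _ _ hv (n-1) n hq ⟨by omega, by omega⟩ ⟨by omega, by omega⟩
      refine ⟨⟨fun h => ?_, hval⟩, fun h1 => ⟨mem_of_step n l p _ _ hz hs (n-1) n (by omega)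
        (by omega) (by omega) (by omega) (by omega) hq (by omega) (hval h1) (by omega), ?_⟩⟩
      · have h1i : (0:ℤ) ≤ Function.update (Function.update p.1 (n-1) (p.1 (n-1) - 1)) n
            (p.1 n + 1) (n-1) := (h (n-1) (by omega) (by omega)).1
        omega
      · rw [hd, va]; omega
    · have hft : ftilde n (n-1) p
          = (p.1, Function.update (Function.update p.2 n (p.2 n - 1)) (n-1) (p.2 (n-1) + 1)) := by
        unfold ftilde; simp only [if_neg hi0, if_neg hile, eq_self_iff_true, if_true, if_neg hc]
      have va : Function.update (Function.update p.2 n (p.2 n - 1)) (n-1) (p.2 (n-1) + 1) (n-1)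
          = p.2 (n-1) + 1 := Function.update_self _ _ _
      have vb : Function.update (Function.update p.2 n (p.2 n - 1)) (n-1) (p.2 (n-1) + 1) n
          = p.2 n - 1 := by
        rw [Function.update_of_ne (by omega), Function.update_self]
      have hq : ∀ j, j ≠ n-1 → j ≠ n → p.1 j = p.1 j ∧
          Function.update (Function.update p.2 n (p.2 n - 1)) (n-1) (p.2 (n-1) + 1) j = p.2 j :=
        fun j h1 h2 => ⟨rfl, by rw [Function.update_of_ne h1, Function.update_of_ne h2]⟩
      rw [hft]
      have hval : 1 ≤ dphi n (n-1) p → dvalid n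
          (p.1, Function.update (Function.update p.2 n (p.2 n - 1)) (n-1) (p.2 (n-1) + 1)) :=
        fun h1 => dvalid_of n p _ _ hv (n-1) n hq ⟨by omega, by omega⟩ ⟨by omega, by omega⟩
      refine ⟨⟨fun _ => by omega, hval⟩, fun h1 => ⟨mem_of_step n l p _ _ hz hs (n-1) n (by omega)
        (by omega) (by omega) (by omega) (by omega) hq (by omega) (hval h1) (by omega), ?_⟩⟩
      rw [hd, vb]; omega
  · have hin : n = i := by omega
    subst hin
    have hd : ∀ Q1 Q2 : ℕ → ℤ, dphi n n (Q1, Q2) = Q1 (n-1) + Q1 n := fun _ _ => by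
      simp only [dphi]; rw [if_neg hi0, if_neg hile, if_neg hin1]
    have hdp : dphi n n p = p.1 (n-1) + p.1 n := by
      simp only [dphi]; rw [if_neg hi0, if_neg hile, if_neg hin1]
    by_cases hc : 1 ≤ p.1 n ∧ p.2 n = 0
    · have hft : ftilde n n p
          = (Function.update p.1 n (p.1 n - 1), Function.update p.2 (n-1) (p.2 (n-1) + 1)) := by
        unfold ftilde; rw [if_neg hi0, if_neg hile, if_neg hin1, if_pos hc]
      have va1 : Function.update p.1 n (p.1 n - 1) (n-1) = p.1 (n-1) :=
        Function.update_of_ne (by omega) _ _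
      have van : Function.update p.1 n (p.1 n - 1) n = p.1 n - 1 := Function.update_self _ _ _
      have vb1 : Function.update p.2 (n-1) (p.2 (n-1) + 1) (n-1) = p.2 (n-1) + 1 :=
        Function.update_self _ _ _
      have vbn : Function.update p.2 (n-1) (p.2 (n-1) + 1) n = p.2 n :=
        Function.update_of_ne (by omega) _ _
      have hq : ∀ j, j ≠ n-1 → j ≠ n → Function.update p.1 n (p.1 n - 1) j = p.1 j ∧
          Function.update p.2 (n-1) (p.2 (n-1) + 1) j = p.2 j :=
        fun j h1 h2 => ⟨Function.update_of_ne h2 _ _, Function.update_of_ne h1 _ _⟩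
      rw [hft]
      have hval : 1 ≤ dphi n n p → dvalid n
          (Function.update p.1 n (p.1 n - 1), Function.update p.2 (n-1) (p.2 (n-1) + 1)) :=
        fun h1 => dvalid_of n p _ _ hv (n-1) n hq ⟨by omega, by omega⟩ ⟨by omega, by omega⟩
      refine ⟨⟨fun _ => by omega, hval⟩, fun h1 => ⟨mem_of_step n l p _ _ hz hs (n-1) n (by omega)
        (by omega) (by omega) (by omega) (by omega) hq (by omega) (hval h1) (by omega), ?_⟩⟩
      rw [hd, va1, van]; omega
    · have hx : p.1 n = 0 := by omega
      have hft : ftilde n n p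
          = (Function.update p.1 (n-1) (p.1 (n-1) - 1), Function.update p.2 n (p.2 n + 1)) := by
        unfold ftilde; rw [if_neg hi0, if_neg hile, if_neg hin1, if_neg hc]
      have va1 : Function.update p.1 (n-1) (p.1 (n-1) - 1) (n-1) = p.1 (n-1) - 1 :=
        Function.update_self _ _ _
      have van : Function.update p.1 (n-1) (p.1 (n-1) - 1) n = p.1 n :=
        Function.update_of_ne (by omega) _ _
      have vb1 : Function.update p.2 n (p.2 n + 1) (n-1) = p.2 (n-1) :=
        Function.update_of_ne (by omega) _ _
      have vbn : Function.update p.2 n (p.2 n + 1) n = p.2 n + 1 := Function.update_self _ _ _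
      have hq : ∀ j, j ≠ n-1 → j ≠ n → Function.update p.1 (n-1) (p.1 (n-1) - 1) j = p.1 j ∧
          Function.update p.2 n (p.2 n + 1) j = p.2 j :=
        fun j h1 h2 => ⟨Function.update_of_ne h1 _ _, Function.update_of_ne h2 _ _⟩
      rw [hft]
      have hval : 1 ≤ dphi n n p → dvalid n
          (Function.update p.1 (n-1) (p.1 (n-1) - 1), Function.update p.2 n (p.2 n + 1)) :=
        fun h1 => dvalid_of n p _ _ hv (n-1) n hq ⟨by omega, by omega⟩ ⟨by omega, by omega⟩
      refine ⟨⟨fun h => ?_, hval⟩, fun h1 => ⟨mem_of_step n l p _ _ hz hs (n-1) n (by omega)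
        (by omega) (by omega) (by omega) (by omega) hq (by omega) (hval h1) (by omega), ?_⟩⟩
      · have h1i : (0:ℤ) ≤ Function.update p.1 (n-1) (p.1 (n-1) - 1) (n-1) :=
          (h (n-1) (by omega) (by omega)).1
        omega
      · rw [hd, va1, van]; omega



lemma key_e (n l : ℕ) (hn : 4 ≤ n) (i : ℕ) (hi : i ≤ n) (p : DElt) (hp : dmem n l p) :
    (dvalid n (etilde n i p) ↔ 1 ≤ deps n i p) ∧
      (1 ≤ deps n i p →
        dmem n l (etilde n i p) ∧ deps n i (etilde n i p) = deps n i p - 1) := by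
  obtain ⟨hv, hz, hor, hs⟩ := hp
  by_cases hi0 : i = 0
  · subst hi0
    have e1 := hv 1 (by omega) (by omega)
    have e2 := hv 2 (by omega) (by omega)
    have hd : ∀ Q1 Q2 : ℕ → ℤ, deps n 0 (Q1, Q2) = Q1 1 + pPart (Q1 2 - Q2 2) :=
      fun _ _ => rfl
    have hdp : deps n 0 p = p.1 1 + pPart (p.1 2 - p.2 2) := rfl
    by_cases hc : p.2 2 < p.1 2
    · have hft : etilde n 0 p
          = (Function.update p.1 2 (p.1 2 - 1), Function.update p.2 1 (p.2 1 + 1)) := by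
        unfold etilde; rw [if_pos rfl, if_pos hc]
      have v11 : Function.update p.1 2 (p.1 2 - 1) 1 = p.1 1 :=
        Function.update_of_ne (by omega) _ _
      have v12 : Function.update p.1 2 (p.1 2 - 1) 2 = p.1 2 - 1 :=
        Function.update_self _ _ _
      have v21 : Function.update p.2 1 (p.2 1 + 1) 1 = p.2 1 + 1 :=
        Function.update_self _ _ _
      have v22 : Function.update p.2 1 (p.2 1 + 1) 2 = p.2 2 :=
        Function.update_of_ne (by omega) _ _
      have v1n : Function.update p.1 2 (p.1 2 - 1) n = p.1 n :=
        Function.update_of_ne (by omega) _ _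
      have v2n : Function.update p.2 1 (p.2 1 + 1) n = p.2 n :=
        Function.update_of_ne (by omega) _ _
      have hP : pPart (p.1 2 - p.2 2) = p.1 2 - p.2 2 := pPart_of_nonneg (by omega)
      have hq : ∀ j, j ≠ 1 → j ≠ 2 → Function.update p.1 2 (p.1 2 - 1) j = p.1 j ∧
          Function.update p.2 1 (p.2 1 + 1) j = p.2 j :=
        fun j h1 h2 => ⟨Function.update_of_ne h2 _ _, Function.update_of_ne h1 _ _⟩
      rw [hft]
      have hval : 1 ≤ deps n 0 p → dvalid n
          (Function.update p.1 2 (p.1 2 - 1), Function.update p.2 1 (p.2 1 + 1)) :=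
        fun h1 => dvalid_of n p _ _ hv 1 2 hq ⟨by omega, by omega⟩ ⟨by omega, by omega⟩
      refine ⟨⟨fun _ => by omega, hval⟩, fun h1 => ⟨mem_of_step n l p _ _ hz hs 1 2 (by omega)
        (by omega) (by omega) (by omega) (by omega) hq (by omega) (hval h1) (by omega), ?_⟩⟩
      rw [hd, v11, v12, v22, pPart_of_nonneg] <;> omega
    · have hft : etilde n 0 p
          = (Function.update p.1 1 (p.1 1 - 1), Function.update p.2 2 (p.2 2 + 1)) := by
        unfold etilde; rw [if_pos rfl, if_neg hc]
      have v11 : Function.update p.1 1 (p.1 1 - 1) 1 = p.1 1 - 1 :=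
        Function.update_self _ _ _
      have v12 : Function.update p.1 1 (p.1 1 - 1) 2 = p.1 2 :=
        Function.update_of_ne (by omega) _ _
      have v21 : Function.update p.2 2 (p.2 2 + 1) 1 = p.2 1 :=
        Function.update_of_ne (by omega) _ _
      have v22 : Function.update p.2 2 (p.2 2 + 1) 2 = p.2 2 + 1 :=
        Function.update_self _ _ _
      have v1n : Function.update p.1 1 (p.1 1 - 1) n = p.1 n :=
        Function.update_of_ne (by omega) _ _
      have v2n : Function.update p.2 2 (p.2 2 + 1) n = p.2 n :=
        Function.update_of_ne (by omega) _ _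
      have hP : pPart (p.1 2 - p.2 2) = 0 := pPart_of_nonpos (by omega)
      have hq : ∀ j, j ≠ 1 → j ≠ 2 → Function.update p.1 1 (p.1 1 - 1) j = p.1 j ∧
          Function.update p.2 2 (p.2 2 + 1) j = p.2 j :=
        fun j h1 h2 => ⟨Function.update_of_ne h1 _ _, Function.update_of_ne h2 _ _⟩
      rw [hft]
      have hval : 1 ≤ deps n 0 p → dvalid n
          (Function.update p.1 1 (p.1 1 - 1), Function.update p.2 2 (p.2 2 + 1)) :=
        fun h1 => dvalid_of n p _ _ hv 1 2 hq ⟨by omega, by omega⟩ ⟨by omega, by omega⟩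
      refine ⟨⟨fun h => ?_, hval⟩, fun h1 => ⟨mem_of_step n l p _ _ hz hs 1 2 (by omega)
        (by omega) (by omega) (by omega) (by omega) hq (by omega) (hval h1) (by omega), ?_⟩⟩
      · have h11 : (0:ℤ) ≤ Function.update p.1 1 (p.1 1 - 1) 1 := (h 1 (by omega) (by omega)).1
        omega
      · rw [hd, v11, v12, v22, pPart_of_nonpos] <;> omega
  by_cases hile : i ≤ n - 2
  · have hi1 : 1 ≤ i := by omega
    have ei := hv i (by omega) (by omega)
    have ei1 := hv (i+1) (by omega) (by omega)
    have hd : ∀ Q1 Q2 : ℕ → ℤ,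
        deps n i (Q1, Q2) = Q2 i + pPart (Q1 (i+1) - Q2 (i+1)) := fun _ _ => by
      simp only [deps, if_neg hi0, if_pos hile]
    have hdp : deps n i p = p.2 i + pPart (p.1 (i+1) - p.2 (i+1)) := by
      simp only [deps, if_neg hi0, if_pos hile]
    by_cases hc : p.2 (i+1) < p.1 (i+1)
    · have hft : etilde n i p
          = (Function.update (Function.update p.1 i (p.1 i + 1)) (i+1) (p.1 (i+1) - 1), p.2) := by
        unfold etilde; rw [if_neg hi0, if_pos hile, if_pos hc]
      have va : Function.update (Function.update p.1 i (p.1 i + 1)) (i+1) (p.1 (i+1) - 1) i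
          = p.1 i + 1 := by
        rw [Function.update_of_ne (by omega), Function.update_self]
      have vb : Function.update (Function.update p.1 i (p.1 i + 1)) (i+1) (p.1 (i+1) - 1) (i+1)
          = p.1 (i+1) - 1 := Function.update_self _ _ _
      have v1n : Function.update (Function.update p.1 i (p.1 i + 1)) (i+1) (p.1 (i+1) - 1) n
          = p.1 n := by
        rw [Function.update_of_ne (by omega), Function.update_of_ne (by omega)]
      have hP : pPart (p.1 (i+1) - p.2 (i+1)) = p.1 (i+1) - p.2 (i+1) :=
        pPart_of_nonneg (by omega)
      have hq : ∀ j, j ≠ i → j ≠ i+1 →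
          Function.update (Function.update p.1 i (p.1 i + 1)) (i+1) (p.1 (i+1) - 1) j = p.1 j ∧
          p.2 j = p.2 j := fun j h1 h2 =>
        ⟨by rw [Function.update_of_ne h2, Function.update_of_ne h1], rfl⟩
      rw [hft]
      have hval : 1 ≤ deps n i p → dvalid n
          (Function.update (Function.update p.1 i (p.1 i + 1)) (i+1) (p.1 (i+1) - 1), p.2) :=
        fun h1 => dvalid_of n p _ _ hv i (i+1) hq ⟨by omega, by omega⟩ ⟨by omega, by omega⟩
      refine ⟨⟨fun _ => by omega, hval⟩, fun h1 => ⟨mem_of_step n l p _ _ hz hs i (i+1) (by omega)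
        (by omega) (by omega) (by omega) (by omega) hq (by omega) (hval h1) (by omega), ?_⟩⟩
      rw [hd, vb, pPart_of_nonneg] <;> omega
    · have hft : etilde n i p
          = (p.1, Function.update (Function.update p.2 (i+1) (p.2 (i+1) + 1)) i (p.2 i - 1)) := by
        unfold etilde; rw [if_neg hi0, if_pos hile, if_neg hc]
      have va : Function.update (Function.update p.2 (i+1) (p.2 (i+1) + 1)) i (p.2 i - 1) i
          = p.2 i - 1 := Function.update_self _ _ _
      have vb : Function.update (Function.update p.2 (i+1) (p.2 (i+1) + 1)) i (p.2 i - 1) (i+1)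
          = p.2 (i+1) + 1 := by
        rw [Function.update_of_ne (by omega), Function.update_self]
      have v2n : Function.update (Function.update p.2 (i+1) (p.2 (i+1) + 1)) i (p.2 i - 1) n
          = p.2 n := by
        rw [Function.update_of_ne (by omega), Function.update_of_ne (by omega)]
      have hP : pPart (p.1 (i+1) - p.2 (i+1)) = 0 := pPart_of_nonpos (by omega)
      have hq : ∀ j, j ≠ i → j ≠ i+1 → p.1 j = p.1 j ∧
          Function.update (Function.update p.2 (i+1) (p.2 (i+1) + 1)) i (p.2 i - 1) j = p.2 j :=
        fun j h1 h2 => ⟨rfl, by rw [Function.update_of_ne h1, Function.update_of_ne h2]⟩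
      rw [hft]
      have hval : 1 ≤ deps n i p → dvalid n
          (p.1, Function.update (Function.update p.2 (i+1) (p.2 (i+1) + 1)) i (p.2 i - 1)) :=
        fun h1 => dvalid_of n p _ _ hv i (i+1) hq ⟨by omega, by omega⟩ ⟨by omega, by omega⟩
      refine ⟨⟨fun h => ?_, hval⟩, fun h1 => ⟨mem_of_step n l p _ _ hz hs i (i+1) (by omega)
        (by omega) (by omega) (by omega) (by omega) hq (by omega) (hval h1) (by omega), ?_⟩⟩
      · have h1i : (0:ℤ) ≤ Function.update (Function.update p.2 (i+1) (p.2 (i+1) + 1)) i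
            (p.2 i - 1) i := (h i (by omega) (by omega)).2
        omega
      · rw [hd, va, vb, pPart_of_nonpos] <;> omega
  have en1 := hv (n-1) (by omega) (by omega)
  have en := hv n (by omega) (by omega)
  by_cases hin1 : i = n - 1
  · subst hin1
    have hd : ∀ Q1 Q2 : ℕ → ℤ, deps n (n-1) (Q1, Q2) = Q2 (n-1) + Q1 n := fun _ _ => by
      simp only [deps, if_neg hi0, if_neg hile, eq_self_iff_true, if_true]
    have hdp : deps n (n-1) p = p.2 (n-1) + p.1 n := by
      simp only [deps, if_neg hi0, if_neg hile, eq_self_iff_true, if_true]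
    by_cases hc : 1 ≤ p.1 n ∧ p.2 n = 0
    · have hft : etilde n (n-1) p
          = (Function.update (Function.update p.1 (n-1) (p.1 (n-1) + 1)) n (p.1 n - 1), p.2) := by
        unfold etilde; simp only [if_neg hi0, if_neg hile, eq_self_iff_true, if_true, if_pos hc]
      have va : Function.update (Function.update p.1 (n-1) (p.1 (n-1) + 1)) n (p.1 n - 1) (n-1)
          = p.1 (n-1) + 1 := by
        rw [Function.update_of_ne (by omega), Function.update_self]
      have vb : Function.update (Function.update p.1 (n-1) (p.1 (n-1) + 1)) n (p.1 n - 1) n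
          = p.1 n - 1 := Function.update_self _ _ _
      have hq : ∀ j, j ≠ n-1 → j ≠ n →
          Function.update (Function.update p.1 (n-1) (p.1 (n-1) + 1)) n (p.1 n - 1) j = p.1 j ∧
          p.2 j = p.2 j := fun j h1 h2 =>
        ⟨by rw [Function.update_of_ne h2, Function.update_of_ne h1], rfl⟩
      rw [hft]
      have hval : 1 ≤ deps n (n-1) p → dvalid n
          (Function.update (Function.update p.1 (n-1) (p.1 (n-1) + 1)) n (p.1 n - 1), p.2) :=
        fun h1 => dvalid_of n p _ _ hv (n-1) n hq ⟨by omega, by omega⟩ ⟨by omega, by omega⟩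
      refine ⟨⟨fun _ => by omega, hval⟩, fun h1 => ⟨mem_of_step n l p _ _ hz hs (n-1) n (by omega)
        (by omega) (by omega) (by omega) (by omega) hq (by omega) (hval h1) (by omega), ?_⟩⟩
      rw [hd, vb]; omega
    · have hx : p.1 n = 0 := by omega
      have hft : etilde n (n-1) p
          = (p.1, Function.update (Function.update p.2 n (p.2 n + 1)) (n-1) (p.2 (n-1) - 1)) := by
        unfold etilde; simp only [if_neg hi0, if_neg hile, eq_self_iff_true, if_true, if_neg hc]
      have va : Function.update (Function.update p.2 n (p.2 n + 1)) (n-1) (p.2 (n-1) - 1) (n-1)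
          = p.2 (n-1) - 1 := Function.update_self _ _ _
      have vb : Function.update (Function.update p.2 n (p.2 n + 1)) (n-1) (p.2 (n-1) - 1) n
          = p.2 n + 1 := by
        rw [Function.update_of_ne (by omega), Function.update_self]
      have hq : ∀ j, j ≠ n-1 → j ≠ n → p.1 j = p.1 j ∧
          Function.update (Function.update p.2 n (p.2 n + 1)) (n-1) (p.2 (n-1) - 1) j = p.2 j :=
        fun j h1 h2 => ⟨rfl, by rw [Function.update_of_ne h1, Function.update_of_ne h2]⟩
      rw [hft]
      have hval : 1 ≤ deps n (n-1) p → dvalid n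
          (p.1, Function.update (Function.update p.2 n (p.2 n + 1)) (n-1) (p.2 (n-1) - 1)) :=
        fun h1 => dvalid_of n p _ _ hv (n-1) n hq ⟨by omega, by omega⟩ ⟨by omega, by omega⟩
      refine ⟨⟨fun h => ?_, hval⟩, fun h1 => ⟨mem_of_step n l p _ _ hz hs (n-1) n (by omega)
        (by omega) (by omega) (by omega) (by omega) hq (by omega) (hval h1) (by omega), ?_⟩⟩
      · have h1i : (0:ℤ) ≤ Function.update (Function.update p.2 n (p.2 n + 1)) (n-1)
            (p.2 (n-1) - 1) (n-1) := (h (n-1) (by omega) (by omega)).2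
        omega
      · rw [hd, va]; omega
  · have hin : n = i := by omega
    subst hin
    have hd : ∀ Q1 Q2 : ℕ → ℤ, deps n n (Q1, Q2) = Q2 (n-1) + Q2 n := fun _ _ => by
      simp only [deps, if_neg hi0, if_neg hile, if_neg hin1]
    have hdp : deps n n p = p.2 (n-1) + p.2 n := by
      simp only [deps, if_neg hi0, if_neg hile, if_neg hin1]
    by_cases hc : p.2 n = 0
    · have hft : etilde n n p
          = (Function.update p.1 n (p.1 n + 1), Function.update p.2 (n-1) (p.2 (n-1) - 1)) := by
        unfold etilde; rw [if_neg hi0, if_neg hile, if_neg hin1, if_pos hc]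
      have va1 : Function.update p.1 n (p.1 n + 1) (n-1) = p.1 (n-1) :=
        Function.update_of_ne (by omega) _ _
      have van : Function.update p.1 n (p.1 n + 1) n = p.1 n + 1 := Function.update_self _ _ _
      have vb1 : Function.update p.2 (n-1) (p.2 (n-1) - 1) (n-1) = p.2 (n-1) - 1 :=
        Function.update_self _ _ _
      have vbn : Function.update p.2 (n-1) (p.2 (n-1) - 1) n = p.2 n :=
        Function.update_of_ne (by omega) _ _
      have hq : ∀ j, j ≠ n-1 → j ≠ n → Function.update p.1 n (p.1 n + 1) j = p.1 j ∧
          Function.update p.2 (n-1) (p.2 (n-1) - 1) j = p.2 j :=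
        fun j h1 h2 => ⟨Function.update_of_ne h2 _ _, Function.update_of_ne h1 _ _⟩
      rw [hft]
      have hval : 1 ≤ deps n n p → dvalid n
          (Function.update p.1 n (p.1 n + 1), Function.update p.2 (n-1) (p.2 (n-1) - 1)) :=
        fun h1 => dvalid_of n p _ _ hv (n-1) n hq ⟨by omega, by omega⟩ ⟨by omega, by omega⟩
      refine ⟨⟨fun h => ?_, hval⟩, fun h1 => ⟨mem_of_step n l p _ _ hz hs (n-1) n (by omega)
        (by omega) (by omega) (by omega) (by omega) hq (by omega) (hval h1) (by omega), ?_⟩⟩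
      · have h1i : (0:ℤ) ≤ Function.update p.2 (n-1) (p.2 (n-1) - 1) (n-1) :=
          (h (n-1) (by omega) (by omega)).2
        omega
      · rw [hd, vb1, vbn]; omega
    · have hx : p.1 n = 0 := by omega
      have hft : etilde n n p
          = (Function.update p.1 (n-1) (p.1 (n-1) + 1), Function.update p.2 n (p.2 n - 1)) := by
        unfold etilde; rw [if_neg hi0, if_neg hile, if_neg hin1, if_neg hc]
      have va1 : Function.update p.1 (n-1) (p.1 (n-1) + 1) (n-1) = p.1 (n-1) + 1 :=
        Function.update_self _ _ _
      have van : Function.update p.1 (n-1) (p.1 (n-1) + 1) n = p.1 n :=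
        Function.update_of_ne (by omega) _ _
      have vb1 : Function.update p.2 n (p.2 n - 1) (n-1) = p.2 (n-1) :=
        Function.update_of_ne (by omega) _ _
      have vbn : Function.update p.2 n (p.2 n - 1) n = p.2 n - 1 := Function.update_self _ _ _
      have hq : ∀ j, j ≠ n-1 → j ≠ n → Function.update p.1 (n-1) (p.1 (n-1) + 1) j = p.1 j ∧
          Function.update p.2 n (p.2 n - 1) j = p.2 j :=
        fun j h1 h2 => ⟨Function.update_of_ne h1 _ _, Function.update_of_ne h2 _ _⟩
      rw [hft]
      have hval : 1 ≤ deps n n p → dvalid n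
          (Function.update p.1 (n-1) (p.1 (n-1) + 1), Function.update p.2 n (p.2 n - 1)) :=
        fun h1 => dvalid_of n p _ _ hv (n-1) n hq ⟨by omega, by omega⟩ ⟨by omega, by omega⟩
      refine ⟨⟨fun _ => by omega, hval⟩, fun h1 => ⟨mem_of_step n l p _ _ hz hs (n-1) n (by omega)
        (by omega) (by omega) (by omega) (by omega) hq (by omega) (hval h1) (by omega), ?_⟩⟩
      rw [hd, vb1, vbn]; omega


/-- for `b ∈ B^(l)`, `i ∈ I`, and `k ∈ ℕ`: the `k`-fold iterate
`f̃_i^k b` is a nonzero element of `B^(l)` (i.e. every intermediate application is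
nonzero and the result lies in `B^(l)`) iff `k ≤ φ_i(b)`; and likewise `ẽ_i^k b` is a
nonzero element of `B^(l)` iff `k ≤ ε_i(b)`.  (Consequently `φ_i(b)` and `ε_i(b)` are
the largest such `k`.) -/
theorem stmt19 (n l : ℕ) (hn : 4 ≤ n) (hl : 1 ≤ l) (p : DElt) (hp : dmem n l p)
    (i : ℕ) (hi : i ≤ n) (k : ℕ) :
    (((∀ j, 1 ≤ j → j ≤ k → dvalid n ((ftilde n i)^[j] p)) ∧
        dmem n l ((ftilde n i)^[k] p)) ↔ (k : ℤ) ≤ dphi n i p) ∧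
    (((∀ j, 1 ≤ j → j ≤ k → dvalid n ((etilde n i)^[j] p)) ∧
        dmem n l ((etilde n i)^[k] p)) ↔ (k : ℤ) ≤ deps n i p) := by
  constructor
  · exact iter_key n (ftilde n i) (dphi n i) (dmem n l)
      (fun q hq => (dphi_deps_nonneg n hn i hi q hq.1).1)
      (fun q hq => (key_f n l hn i hi q hq).1)
      (fun q hq h1 => (key_f n l hn i hi q hq).2 h1)
      k p hp
  · exact iter_key n (etilde n i) (deps n i) (dmem n l)
      (fun q hq => (dphi_deps_nonneg n hn i hi q hq.1).2)
      (fun q hq => (key_e n l hn i hi q hq).1)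
      (fun q hq h1 => (key_e n l hn i hi q hq).2 h1)
      k p hp
end
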